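/- arXiv:1807.03929 — 4 statements merged into one kernel-verified Lean document; each statement's English description precedes it below -/
import Mathlib

section
/- Let (X, Y, S) be a random vector on a probability space with X ∈ ℝ^d, Y ∈ {0,1}, S ∈ {0,1}, and let g : ℝ^d → ℝ be measurable with g(X) integrable. Assume the weak prior shift condition: g(X) is conditionally independent of S given Y. Assume P(S = 0) > 0, P(Y = 0, S = 1) > 0, P(Y = 1, S = 1) > 0, and E[g(X) | Y = 1, S = 1] ≠ E[g(X) | Y = 0, S = 1]. Then P(Y = 1 | S = 0) = (E[g(X) | S = 0] − E[g(X) | Y = 0, S = 1]) / (E[g(X) | Y = 1, S = 1] − E[g(X) | Y = 0, S = 1]); in particular this ratio lies in [0,1], so it is unchanged by the trimming map t ↦ max(0, min(1, t)), i.e. both the untrimmed and the trimmed ratio estimator are Fisher consistent for θ = P(Y = 1 | S = 0). -/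
open MeasureTheory ProbabilityTheory

/-- Conditional expectation of `f` given the event `A`: `(∫_A f dμ) / μ(A)`. -/
noncomputable def condMean {Ω : Type*} [MeasurableSpace Ω] (μ : Measure Ω)
    (f : Ω → ℝ) (A : Set Ω) : ℝ :=
  (∫ ω in A, f ω ∂μ) / (μ A).toReal


lemma bool_set_cases (t : Set Bool) : t = ∅ ∨ t = {false} ∨ t = {true} ∨ t = Set.univ := by
  by_cases h1 : true ∈ t <;> by_cases h2 : false ∈ t
  · right; right; right; ext b; cases b <;> simp [h1, h2]
  · right; right; left; ext b; cases b <;> simp [h1, h2]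
  · right; left; ext b; cases b <;> simp [h1, h2]
  · left; ext b; cases b <;> simp [h1, h2]

lemma key {Ω : Type*} [MeasurableSpace Ω] (μ : Measure Ω) [IsProbabilityMeasure μ]
    (f : Ω → ℝ) (S : Ω → Bool) (hf : Measurable f) (hS : Measurable S)
    (hint : Integrable f μ) (A : Set Ω) (hA : MeasurableSet A) (hA0 : μ A ≠ 0)
    (hind : ∀ (s : Bool) (B : Set ℝ), MeasurableSet B →
      μ[|A] ({ω | f ω ∈ B} ∩ {ω | S ω = s}) = μ[|A] {ω | f ω ∈ B} * μ[|A] {ω | S ω = s})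
    (s : Bool) :
    ∫ ω in A ∩ {ω | S ω = s}, f ω ∂μ
      = condMean μ f A * (μ (A ∩ {ω | S ω = s})).toReal := by
  set ν := μ[|A] with hν
  have hprob : IsProbabilityMeasure ν := cond_isProbabilityMeasure hA0
  have hSs : MeasurableSet {ω | S ω = s} := hS (MeasurableSet.singleton s)
  -- independence of f and S under ν
  have hindep : IndepFun f S ν := by
    rw [indepFun_iff_measure_inter_preimage_eq_mul]
    intro B t hB ht
    rcases bool_set_cases t with rfl | rfl | rfl | rfl
    · simp
    · have : S ⁻¹' {false} = {ω | S ω = false} := rfl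
      rw [this]; exact hind false B hB
    · have : S ⁻¹' {true} = {ω | S ω = true} := rfl
      rw [this]; exact hind true B hB
    · rw [show S ⁻¹' Set.univ = Set.univ from rfl, Set.inter_univ, measure_univ, mul_one]
  -- indicator version
  have hφ : Measurable (fun b : Bool => if b = s then (1:ℝ) else 0) := Measurable.of_discrete
  have hindep2 : IndepFun f ((fun b : Bool => if b = s then (1:ℝ) else 0) ∘ S) ν :=
    hindep.comp measurable_id hφ
  have hintν : Integrable f ν := by
    rw [hν, ProbabilityTheory.cond]
    exact (hint.restrict).smul_measure (ENNReal.inv_ne_top.2 hA0)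
  have hind_int : Integrable ((fun b : Bool => if b = s then (1:ℝ) else 0) ∘ S) ν := by
    apply Integrable.mono' (integrable_const 1)
    · exact (hφ.comp hS).aestronglyMeasurable
    · filter_upwards with ω; by_cases h : S ω = s <;> simp [Function.comp, h]
  have hmul : ∫ ω, (f * ((fun b : Bool => if b = s then (1:ℝ) else 0) ∘ S)) ω ∂ν
      = (∫ ω, f ω ∂ν) * ∫ ω, ((fun b : Bool => if b = s then (1:ℝ) else 0) ∘ S) ω ∂ν :=
    hindep2.integral_mul_eq_mul_integral hintν.aestronglyMeasurable hind_int.aestronglyMeasurable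
  -- rewrite each piece
  have e1 : (f * ((fun b : Bool => if b = s then (1:ℝ) else 0) ∘ S))
      = Set.indicator {ω | S ω = s} f := by
    funext ω; by_cases h : S ω = s <;> simp [Set.indicator, h, Function.comp]
  have e2 : ((fun b : Bool => if b = s then (1:ℝ) else 0) ∘ S)
      = Set.indicator {ω | S ω = s} (fun _ => (1:ℝ)) := by
    funext ω; by_cases h : S ω = s <;> simp [Set.indicator, h, Function.comp]
  rw [e1] at hmul
  rw [e2] at hmul
  rw [integral_indicator hSs, integral_indicator hSs] at hmul
  -- now hmul : ∫ ω in {S=s}, f ∂ν = (∫ f ∂ν) * ∫ in {S=s}, 1 ∂ν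
  have hAfin : μ A ≠ ⊤ := measure_ne_top μ A
  have hνr : ∀ (t : Set Ω), MeasurableSet t → ∫ ω in t, f ω ∂ν
      = (μ A)⁻¹.toReal * ∫ ω in A ∩ t, f ω ∂μ := by
    intro t htm
    rw [hν, ProbabilityTheory.cond, Measure.restrict_smul, integral_smul_measure,
      Measure.restrict_restrict htm, Set.inter_comm]
    simp
  rw [hνr _ hSs] at hmul
  have hνtot : ∫ ω, f ω ∂ν = (μ A)⁻¹.toReal * ∫ ω in A, f ω ∂μ := by
    rw [hν, ProbabilityTheory.cond, integral_smul_measure]; simp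
  rw [hνtot] at hmul
  rw [setIntegral_const] at hmul
  have hνs : ν {ω | S ω = s} = (μ A)⁻¹ * μ (A ∩ {ω | S ω = s}) := cond_apply hA μ _
  rw [measureReal_def, hνs] at hmul
  have hc : (μ A).toReal > 0 := ENNReal.toReal_pos hA0 hAfin
  have hc' : (μ A)⁻¹.toReal = ((μ A).toReal)⁻¹ := by simp [ENNReal.toReal_inv]
  rw [hc'] at hmul
  have hm : ((μ A)⁻¹ * μ (A ∩ {ω | S ω = s})).toReal
      = ((μ A).toReal)⁻¹ * (μ (A ∩ {ω | S ω = s})).toReal := by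
    rw [ENNReal.toReal_mul, ENNReal.toReal_inv]
  rw [hm] at hmul
  simp only [smul_eq_mul, mul_one] at hmul
  rw [condMean]
  field_simp at hmul ⊢
  have h2 : (∫ ω in A ∩ {ω | S ω = s}, f ω ∂μ) * (μ A).toReal
      = (∫ ω in A, f ω ∂μ) * (μ (A ∩ {ω | S ω = s})).toReal := by
    apply mul_right_cancel₀ hc.ne'
    linear_combination (μ A).toReal * hmul
  linarith [h2]

/-- Fisher consistency of the (trimmed and untrimmed) ratio
estimator: under weak prior shift, `P(Y = 1 | S = 0)` equals the population
ratio, which lies in `[0,1]` and is hence unchanged by trimming. -/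
theorem stmt_2 {Ω : Type*} [MeasurableSpace Ω] (μ : Measure Ω) [IsProbabilityMeasure μ]
    {d : ℕ} (X : Ω → (Fin d → ℝ)) (Y S : Ω → Bool) (g : (Fin d → ℝ) → ℝ)
    (hX : Measurable X) (hY : Measurable Y) (hS : Measurable S) (hg : Measurable g)
    (hint : Integrable (fun ω => g (X ω)) μ)
    -- weak prior shift: `g(X)` is conditionally independent of `S` given `Y`
    (hwps : ∀ j : Bool, μ {ω | Y ω = j} ≠ 0 → ∀ (s : Bool) (B : Set ℝ),
      MeasurableSet B →
        μ[|{ω | Y ω = j}] ({ω | g (X ω) ∈ B} ∩ {ω | S ω = s})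
          = μ[|{ω | Y ω = j}] {ω | g (X ω) ∈ B} * μ[|{ω | Y ω = j}] {ω | S ω = s})
    (hS0 : μ {ω | S ω = false} ≠ 0)
    (hY0S1 : μ {ω | Y ω = false ∧ S ω = true} ≠ 0)
    (hY1S1 : μ {ω | Y ω = true ∧ S ω = true} ≠ 0)
    (hsep : condMean μ (fun ω => g (X ω)) {ω | Y ω = true ∧ S ω = true}
      ≠ condMean μ (fun ω => g (X ω)) {ω | Y ω = false ∧ S ω = true}) :
    let a1 : ℝ := condMean μ (fun ω => g (X ω)) {ω | Y ω = true ∧ S ω = true}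
    let a0 : ℝ := condMean μ (fun ω => g (X ω)) {ω | Y ω = false ∧ S ω = true}
    let e0 : ℝ := condMean μ (fun ω => g (X ω)) {ω | S ω = false}
    let θ : ℝ := (μ ({ω | Y ω = true} ∩ {ω | S ω = false})).toReal
      / (μ {ω | S ω = false}).toReal
    θ = (e0 - a0) / (a1 - a0) ∧
      (e0 - a0) / (a1 - a0) ∈ Set.Icc (0 : ℝ) 1 ∧
      max 0 (min 1 ((e0 - a0) / (a1 - a0))) = (e0 - a0) / (a1 - a0) := by
  intro a1 a0 e0 θ
  have hfm : Measurable fun ω => g (X ω) := hg.comp hX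
  have hA1m : MeasurableSet {ω | Y ω = true} := hY (MeasurableSet.singleton true)
  have hA0m : MeasurableSet {ω | Y ω = false} := hY (MeasurableSet.singleton false)
  have hS0m : MeasurableSet {ω | S ω = false} := hS (MeasurableSet.singleton false)
  have hset1 : {ω | Y ω = true ∧ S ω = true} = {ω | Y ω = true} ∩ {ω | S ω = true} := rfl
  have hset0 : {ω | Y ω = false ∧ S ω = true} = {ω | Y ω = false} ∩ {ω | S ω = true} := rfl
  have hY1 : μ {ω | Y ω = true} ≠ 0 :=
    fun h => hY1S1 (measure_mono_null (fun ω hω => hω.1) h)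
  have hY0 : μ {ω | Y ω = false} ≠ 0 :=
    fun h => hY0S1 (measure_mono_null (fun ω hω => hω.1) h)
  have key1 := fun s => key μ (fun ω => g (X ω)) S hfm hS hint _ hA1m hY1 (hwps true hY1) s
  have key0 := fun s => key μ (fun ω => g (X ω)) S hfm hS hint _ hA0m hY0 (hwps false hY0) s
  set m1 : ℝ := condMean μ (fun ω => g (X ω)) {ω | Y ω = true} with hm1def
  set m0 : ℝ := condMean μ (fun ω => g (X ω)) {ω | Y ω = false} with hm0def
  set p : ℝ := (μ ({ω | Y ω = true} ∩ {ω | S ω = false})).toReal with hpdef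
  set q : ℝ := (μ ({ω | Y ω = false} ∩ {ω | S ω = false})).toReal with hqdef
  have hY1S1' : μ ({ω | Y ω = true} ∩ {ω | S ω = true}) ≠ 0 := by rw [← hset1]; exact hY1S1
  have hY0S1' : μ ({ω | Y ω = false} ∩ {ω | S ω = true}) ≠ 0 := by rw [← hset0]; exact hY0S1
  have ha1 : a1 = m1 := by
    show condMean μ (fun ω => g (X ω)) {ω | Y ω = true ∧ S ω = true} = m1
    rw [condMean, hset1, key1 true, mul_div_assoc, div_self
      (ENNReal.toReal_ne_zero.mpr ⟨hY1S1', measure_ne_top _ _⟩), mul_one]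
  have ha0 : a0 = m0 := by
    show condMean μ (fun ω => g (X ω)) {ω | Y ω = false ∧ S ω = true} = m0
    rw [condMean, hset0, key0 true, mul_div_assoc, div_self
      (ENNReal.toReal_ne_zero.mpr ⟨hY0S1', measure_ne_top _ _⟩), mul_one]
  have hsplitset : {ω | S ω = false}
      = ({ω | Y ω = true} ∩ {ω | S ω = false}) ∪ ({ω | Y ω = false} ∩ {ω | S ω = false}) := by
    ext ω; cases h : Y ω <;> simp [h]
  have hdisj : Disjoint ({ω | Y ω = true} ∩ {ω | S ω = false})
      ({ω | Y ω = false} ∩ {ω | S ω = false}) := by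
    rw [Set.disjoint_left]
    rintro ω ⟨h1, _⟩ ⟨h2, _⟩
    simp only [Set.mem_setOf_eq] at h1 h2
    rw [h1] at h2; exact Bool.noConfusion h2
  have hIsplit : ∫ ω in {ω | S ω = false}, g (X ω) ∂μ = m1 * p + m0 * q := by
    rw [hsplitset, setIntegral_union hdisj (hA0m.inter hS0m)
      hint.integrableOn hint.integrableOn, key1 false, key0 false]
  have hμsplit : (μ {ω | S ω = false}).toReal = p + q := by
    rw [hsplitset, measure_union hdisj (hA0m.inter hS0m),
      ENNReal.toReal_add (measure_ne_top _ _) (measure_ne_top _ _)]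
  have hpq : 0 < p + q := by
    rw [← hμsplit]; exact ENNReal.toReal_pos hS0 (measure_ne_top _ _)
  have hp : 0 ≤ p := ENNReal.toReal_nonneg
  have hq : 0 ≤ q := ENNReal.toReal_nonneg
  have he0 : e0 = (m1 * p + m0 * q) / (p + q) := by
    show condMean μ (fun ω => g (X ω)) {ω | S ω = false} = _
    rw [condMean, hIsplit, hμsplit]
  have hθ : θ = p / (p + q) := by
    show p / (μ {ω | S ω = false}).toReal = _
    rw [hμsplit]
  have hm10 : m1 ≠ m0 := by rw [← ha1, ← ha0]; exact hsep
  have hmm0 : m1 - m0 ≠ 0 := sub_ne_zero.mpr hm10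
  have hratio : (e0 - a0) / (a1 - a0) = p / (p + q) := by
    rw [he0, ha1, ha0]
    field_simp
    ring
  have hicc : p / (p + q) ∈ Set.Icc (0 : ℝ) 1 := by
    constructor
    · exact div_nonneg hp hpq.le
    · exact (div_le_one hpq).mpr (le_add_of_nonneg_right hq)
  refine ⟨by rw [hθ, hratio], by rw [hratio]; exact hicc, ?_⟩
  rw [hratio, min_eq_right hicc.2, max_eq_right hicc.1]
end

section
/- Let Z_1 and Z_2 be square-integrable real random variables on a probability space with μ_2 := E[Z_2] ≠ 0, μ_1 := E[Z_1], and μ_1/μ_2 ∈ [0,1]. Define T = max(0, min(1, Z_1/Z_2)) (with the convention Z_1/Z_2 = 0 on the event Z_2 = 0). Then for every ε_1, ε_2 ∈ (0,1): E[(T − μ_1/μ_2)^2] ≤ 4(|μ_1| + ε_1) · max(Var[Z_1], Var[Z_2]) / min(1, (1 − ε_2)^4 μ_2^4) + ε_1^{-2} Var[Z_1] + (ε_2 μ_2)^{-2} Var[Z_2]. -/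
open MeasureTheory ProbabilityTheory

/-- the clamp to `[0,1]` is 1-Lipschitz. -/
lemma clamp_lip (x y : ℝ) : |max 0 (min 1 x) - max 0 (min 1 y)| ≤ |x - y| := by
  have h1 : |max 0 (min 1 x) - max 0 (min 1 y)| ≤ |min 1 x - min 1 y| := by
    rw [max_comm 0 (min 1 x), max_comm 0 (min 1 y)]
    exact abs_max_sub_max_le_abs _ _ _
  have h2 : |min 1 x - min 1 y| ≤ max |(1:ℝ) - 1| |x - y| :=
    abs_min_sub_min_le_max 1 x 1 y
  simpa using h1.trans (h2.trans (by simp [abs_nonneg]))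

lemma sq_sub_le_one {t r : ℝ} (ht0 : 0 ≤ t) (ht1 : t ≤ 1) (hr0 : 0 ≤ r) (hr1 : r ≤ 1) :
    (t - r) ^ 2 ≤ 1 := by nlinarith

set_option maxHeartbeats 1000000 in
/-- pointwise bound for the trimmed ratio. -/
lemma pt_bound (μ1 μ2 ε2 K c2 x y : ℝ) (hμ2 : μ2 ≠ 0)
    (hr0 : 0 ≤ μ1 / μ2) (hr1 : μ1 / μ2 ≤ 1) (hε2p : 0 < ε2) (hε2l : ε2 < 1)
    (hK0 : 0 ≤ K) (hK1 : 2 / ((1 - ε2) ^ 2 * μ2 ^ 2) ≤ K)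
    (hc2a : ((ε2 * μ2) ^ 2)⁻¹ ≤ c2) (hc2b : 2 * μ1 ^ 2 / ((1 - ε2) ^ 2 * μ2 ^ 4) ≤ c2) :
    (max 0 (min 1 (x / y)) - μ1 / μ2) ^ 2 ≤ K * (x - μ1) ^ 2 + c2 * (y - μ2) ^ 2 := by
  have hc0 : (0:ℝ) < 1 - ε2 := by linarith
  have hm0 : 0 < |μ2| := abs_pos.mpr hμ2
  have hc20 : 0 ≤ c2 := le_trans (by positivity) hc2a
  by_cases h2 : |y - μ2| ≤ ε2 * |μ2|
  · -- good event
    have hyabs : (1 - ε2) * |μ2| ≤ |y| := by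
      have h := abs_sub_abs_le_abs_sub μ2 y
      rw [abs_sub_comm] at h
      nlinarith
    have hy2 : (1 - ε2) ^ 2 * μ2 ^ 2 ≤ y ^ 2 := by
      have h := pow_le_pow_left₀ (by positivity) hyabs 2
      rw [sq_abs] at h
      calc (1 - ε2) ^ 2 * μ2 ^ 2 = ((1 - ε2) * |μ2|) ^ 2 := by rw [mul_pow, sq_abs]
        _ ≤ y ^ 2 := h
    have hy0 : y ≠ 0 := by
      intro h
      rw [h, abs_zero] at hyabs
      nlinarith
    have hcl : |max 0 (min 1 (x / y)) - μ1 / μ2| ≤ |x / y - μ1 / μ2| := by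
      have h := clamp_lip (x / y) (μ1 / μ2)
      rwa [min_eq_right hr1, max_eq_right hr0] at h
    have hsq : (max 0 (min 1 (x / y)) - μ1 / μ2) ^ 2 ≤ (x / y - μ1 / μ2) ^ 2 := by
      rw [← sq_abs (max 0 (min 1 (x / y)) - μ1 / μ2), ← sq_abs (x / y - μ1 / μ2)]
      exact pow_le_pow_left₀ (abs_nonneg _) hcl 2
    have hid : (x / y - μ1 / μ2) ^ 2 =
        ((x - μ1) * μ2 - μ1 * (y - μ2)) ^ 2 / (y ^ 2 * μ2 ^ 2) := by
      field_simp
      ring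
    have hnum : ((x - μ1) * μ2 - μ1 * (y - μ2)) ^ 2 ≤
        2 * (x - μ1) ^ 2 * μ2 ^ 2 + 2 * μ1 ^ 2 * (y - μ2) ^ 2 := by
      nlinarith [sq_nonneg ((x - μ1) * μ2 + μ1 * (y - μ2))]
    have hq0 : (0:ℝ) < μ2 ^ 2 := by positivity
    have hden : (x / y - μ1 / μ2) ^ 2 ≤
        (2 * (x - μ1) ^ 2 * μ2 ^ 2 + 2 * μ1 ^ 2 * (y - μ2) ^ 2) /
          ((1 - ε2) ^ 2 * μ2 ^ 2 * μ2 ^ 2) := by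
      rw [hid]
      apply div_le_div₀ (by positivity) hnum (by positivity)
      exact mul_le_mul_of_nonneg_right hy2 (sq_nonneg μ2)
    have hsplit : (2 * (x - μ1) ^ 2 * μ2 ^ 2 + 2 * μ1 ^ 2 * (y - μ2) ^ 2) /
          ((1 - ε2) ^ 2 * μ2 ^ 2 * μ2 ^ 2)
        = (2 / ((1 - ε2) ^ 2 * μ2 ^ 2)) * (x - μ1) ^ 2 +
          (2 * μ1 ^ 2 / ((1 - ε2) ^ 2 * μ2 ^ 4)) * (y - μ2) ^ 2 := by
      field_simp
    have hfin : (2 / ((1 - ε2) ^ 2 * μ2 ^ 2)) * (x - μ1) ^ 2 +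
          (2 * μ1 ^ 2 / ((1 - ε2) ^ 2 * μ2 ^ 4)) * (y - μ2) ^ 2
        ≤ K * (x - μ1) ^ 2 + c2 * (y - μ2) ^ 2 := by
      apply add_le_add
      · exact mul_le_mul_of_nonneg_right hK1 (sq_nonneg _)
      · exact mul_le_mul_of_nonneg_right hc2b (sq_nonneg _)
    calc (max 0 (min 1 (x / y)) - μ1 / μ2) ^ 2 ≤ (x / y - μ1 / μ2) ^ 2 := hsq
      _ ≤ _ := hden
      _ = _ := hsplit
      _ ≤ _ := hfin
  · -- bad event: pointwise Chebyshev
    push_neg at h2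
    have hT0 : (0:ℝ) ≤ max 0 (min 1 (x / y)) := le_max_left _ _
    have hT1 : max 0 (min 1 (x / y)) ≤ 1 := max_le (by norm_num) (min_le_left _ _)
    have htriv : (max 0 (min 1 (x / y)) - μ1 / μ2) ^ 2 ≤ 1 :=
      sq_sub_le_one hT0 hT1 hr0 hr1
    have hv2 : (ε2 * μ2) ^ 2 ≤ (y - μ2) ^ 2 := by
      have h1 : (ε2 * |μ2|) ^ 2 ≤ |y - μ2| ^ 2 := pow_le_pow_left₀ (by positivity) h2.le 2
      rw [sq_abs] at h1
      calc (ε2 * μ2) ^ 2 = (ε2 * |μ2|) ^ 2 := by rw [mul_pow, mul_pow, sq_abs]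
        _ ≤ _ := h1
    have h1le : (1:ℝ) ≤ ((ε2 * μ2) ^ 2)⁻¹ * (y - μ2) ^ 2 := by
      rw [inv_mul_eq_div, le_div_iff₀ (by positivity)]
      linarith
    have hKterm : (0:ℝ) ≤ K * (x - μ1) ^ 2 := mul_nonneg hK0 (sq_nonneg _)
    have hc2term : ((ε2 * μ2) ^ 2)⁻¹ * (y - μ2) ^ 2 ≤ c2 * (y - μ2) ^ 2 :=
      mul_le_mul_of_nonneg_right hc2a (sq_nonneg _)
    linarith

set_option maxHeartbeats 1000000 in
/-- algebraic bound for the `Z2`-variance contribution. -/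
lemma alg_key1 (b m c V2 M : ℝ) (hb0 : 0 ≤ b) (hbm : b ≤ m) (hm0 : 0 < m)
    (hc0 : 0 < c) (hc1 : c ≤ 1) (hV2 : 0 ≤ V2) (hV2M : V2 ≤ M) :
    2 * b ^ 2 / (c ^ 2 * m ^ 4) * V2 ≤ 4 * b * M / min 1 (c ^ 4 * m ^ 4) := by
  have hM0 : 0 ≤ M := le_trans hV2 hV2M
  rcases le_total (c ^ 4 * m ^ 4) 1 with h | h
  · rw [min_eq_right h]
    have hcm2 : c ^ 2 * m ^ 2 ≤ 1 := by
      nlinarith [sq_nonneg (c ^ 2 * m ^ 2 - 1), sq_nonneg (c * m), mul_pos hc0 hm0]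
    have hcm : c * m ≤ 1 := by nlinarith [sq_nonneg (c * m - 1), mul_pos hc0 hm0]
    have hbc : b * c ≤ 1 := by nlinarith
    have h1 : b ^ 2 * c ^ 2 ≤ b := by nlinarith [mul_nonneg hb0 hc0.le]
    have hkey : 2 * b ^ 2 * c ^ 2 * V2 ≤ 4 * b * M := by nlinarith
    rw [div_mul_eq_mul_div, div_le_div_iff₀ (by positivity) (by positivity)]
    nlinarith [mul_le_mul_of_nonneg_right hkey
      (le_of_lt (show (0:ℝ) < c ^ 2 * m ^ 4 by positivity))]
  · rw [min_eq_left h]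
    have hs : (0:ℝ) < c ^ 2 * m ^ 2 := by positivity
    have hcm2 : 1 ≤ c ^ 2 * m ^ 2 := by nlinarith [hs]
    have hc2le : c ^ 2 ≤ 1 := by nlinarith
    have hmm : c ^ 2 * m ^ 2 ≤ m ^ 2 := by nlinarith [sq_nonneg m]
    have hm1 : 1 ≤ m := by nlinarith
    have hbig : b ≤ c ^ 2 * m ^ 4 := by nlinarith
    rw [div_mul_eq_mul_div, div_le_iff₀ (by positivity), div_one]
    have h1 : b ^ 2 * V2 ≤ c ^ 2 * m ^ 4 * (b * V2) := by
      nlinarith [mul_le_mul_of_nonneg_right hbig (mul_nonneg hb0 hV2)]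
    have h2 : b * V2 ≤ b * M := mul_le_mul_of_nonneg_left hV2M hb0
    have h3 : c ^ 2 * m ^ 4 * (b * V2) ≤ c ^ 2 * m ^ 4 * (b * M) :=
      mul_le_mul_of_nonneg_left h2 (by positivity)
    have h4 : (0:ℝ) ≤ c ^ 2 * m ^ 4 * (b * M) := by positivity
    nlinarith [h1, h3, h4]

set_option maxHeartbeats 1000000 in
/-- algebraic bound for the `Z1`-variance contribution, in the regime where the
trimming level `ε1` is large compared to `c * m`. -/
lemma alg_key2 (ε1 c m V1 M : ℝ) (hε1p : 0 < ε1) (hε1l : ε1 < 1)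
    (hc0 : 0 < c) (hc1 : c ≤ 1) (hm0 : 0 < m) (hcase : c ^ 2 * m ^ 2 < 2 * ε1 ^ 2)
    (hV1 : 0 ≤ V1) (hV1M : V1 ≤ M) :
    2 / (c ^ 2 * m ^ 2) * V1 ≤ 4 * ε1 * M / min 1 (c ^ 4 * m ^ 4) := by
  have hM0 : 0 ≤ M := le_trans hV1 hV1M
  rcases le_total (c ^ 4 * m ^ 4) 1 with h | h
  · rw [min_eq_right h]
    rw [div_mul_eq_mul_div, div_le_div_iff₀ (by positivity) (by positivity)]
    have hkey : 2 * V1 * (c ^ 2 * m ^ 2) ≤ 4 * ε1 * M := by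
      have a1 : 2 * V1 * (c ^ 2 * m ^ 2) ≤ 4 * ε1 ^ 2 * V1 := by nlinarith
      have a2 : ε1 ^ 2 * V1 ≤ ε1 * V1 := by
        nlinarith [mul_nonneg (mul_nonneg hε1p.le (show (0:ℝ) ≤ 1 - ε1 by linarith)) hV1]
      have a3 : ε1 * V1 ≤ ε1 * M := by nlinarith
      linarith
    nlinarith [mul_le_mul_of_nonneg_right hkey
      (le_of_lt (show (0:ℝ) < c ^ 2 * m ^ 2 by positivity))]
  · rw [min_eq_left h]
    have hs : (0:ℝ) < c ^ 2 * m ^ 2 := by positivity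
    have hcm2 : 1 ≤ c ^ 2 * m ^ 2 := by nlinarith [hs]
    have hε1half : 1 / 2 ≤ ε1 := by nlinarith
    rw [div_mul_eq_mul_div, div_le_div_iff₀ (by positivity) one_pos]
    have a1 : 2 * V1 ≤ 4 * ε1 * M := by nlinarith
    have a2 : 4 * ε1 * M ≤ 4 * ε1 * M * (c ^ 2 * m ^ 2) := by nlinarith
    linarith

set_option maxHeartbeats 1000000 in
/-- moment bound for the trimmed ratio of two square-integrable
random variables, compared to the ratio of their expectations. -/
theorem stmt_3 {Ω : Type*} [MeasurableSpace Ω] (μ : Measure Ω) [IsProbabilityMeasure μ]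
    (Z1 Z2 : Ω → ℝ) (hZ1 : Measurable Z1) (hZ2 : Measurable Z2)
    (hL1 : MemLp Z1 2 μ) (hL2 : MemLp Z2 2 μ)
    (hμ2 : (∫ ω, Z2 ω ∂μ) ≠ 0)
    (hratio : (∫ ω, Z1 ω ∂μ) / (∫ ω, Z2 ω ∂μ) ∈ Set.Icc (0 : ℝ) 1)
    (ε1 ε2 : ℝ) (hε1 : ε1 ∈ Set.Ioo (0 : ℝ) 1) (hε2 : ε2 ∈ Set.Ioo (0 : ℝ) 1) :
    (∫ ω, (max 0 (min 1 (Z1 ω / Z2 ω)) - (∫ ω', Z1 ω' ∂μ) / (∫ ω', Z2 ω' ∂μ)) ^ 2 ∂μ) ≤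
      4 * (|∫ ω, Z1 ω ∂μ| + ε1) * max (variance Z1 μ) (variance Z2 μ) /
          min 1 ((1 - ε2) ^ 4 * (∫ ω, Z2 ω ∂μ) ^ 4)
        + (ε1 ^ 2)⁻¹ * variance Z1 μ
        + ((ε2 * ∫ ω, Z2 ω ∂μ) ^ 2)⁻¹ * variance Z2 μ := by
  obtain ⟨hε1p, hε1l⟩ := hε1
  obtain ⟨hε2p, hε2l⟩ := hε2
  obtain ⟨hr0, hr1⟩ := hratio
  set μ1 : ℝ := ∫ ω, Z1 ω ∂μ with hμ1def
  set μ2 : ℝ := ∫ ω, Z2 ω ∂μ with hμ2def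
  set V1 : ℝ := variance Z1 μ with hV1def
  set V2 : ℝ := variance Z2 μ with hV2def
  have hc0 : (0:ℝ) < 1 - ε2 := by linarith only [hε2l]
  have hc1 : (1:ℝ) - ε2 ≤ 1 := by linarith only [hε2p]
  have hm0 : 0 < |μ2| := abs_pos.mpr hμ2
  have hb0 : (0:ℝ) ≤ |μ1| := abs_nonneg _
  have hbm : |μ1| ≤ |μ2| := by
    have h : |μ1 / μ2| ≤ 1 := abs_le.mpr ⟨by linarith only [hr0], hr1⟩
    rw [abs_div, div_le_one hm0] at h
    exact h
  have hm2 : μ2 ^ 2 = |μ2| ^ 2 := (sq_abs μ2).symm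
  have hm4 : μ2 ^ 4 = |μ2| ^ 4 := by
    rw [pow_abs, abs_of_nonneg (by positivity)]
  have hb2 : μ1 ^ 2 = |μ1| ^ 2 := (sq_abs μ1).symm
  have hq0 : (0:ℝ) < μ2 ^ 2 := by rw [hm2]; positivity
  have hq40 : (0:ℝ) < μ2 ^ 4 := by rw [hm4]; positivity
  set K : ℝ := max (ε1 ^ 2)⁻¹ (2 / ((1 - ε2) ^ 2 * μ2 ^ 2)) with hKdef
  set c2 : ℝ := ((ε2 * μ2) ^ 2)⁻¹ + 2 * μ1 ^ 2 / ((1 - ε2) ^ 2 * μ2 ^ 4) with hc2def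
  have hK0 : 0 ≤ K := le_trans (by positivity) (le_max_left _ _)
  have hc2a : ((ε2 * μ2) ^ 2)⁻¹ ≤ c2 := by
    have h : (0:ℝ) ≤ 2 * μ1 ^ 2 / ((1 - ε2) ^ 2 * μ2 ^ 4) := by positivity
    rw [hc2def]; linarith only [h]
  have hc2b : 2 * μ1 ^ 2 / ((1 - ε2) ^ 2 * μ2 ^ 4) ≤ c2 := by
    have h : (0:ℝ) ≤ ((ε2 * μ2) ^ 2)⁻¹ := by positivity
    rw [hc2def]; linarith only [h]
  have hV1nn : 0 ≤ V1 := variance_nonneg _ _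
  have hV2nn : 0 ≤ V2 := variance_nonneg _ _
  set M : ℝ := max V1 V2 with hMdef
  have hV1M : V1 ≤ M := le_max_left _ _
  have hV2M : V2 ≤ M := le_max_right _ _
  set D : ℝ := min 1 ((1 - ε2) ^ 4 * μ2 ^ 4) with hDdef
  have hD0 : 0 < D := lt_min one_pos (by positivity)
  -- pointwise bound
  have hpt : ∀ ω, (max 0 (min 1 (Z1 ω / Z2 ω)) - μ1 / μ2) ^ 2 ≤
      K * (Z1 ω - μ1) ^ 2 + c2 * (Z2 ω - μ2) ^ 2 := fun ω =>
    pt_bound μ1 μ2 ε2 K c2 (Z1 ω) (Z2 ω) hμ2 hr0 hr1 hε2p hε2l hK0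
      (le_max_right _ _) hc2a hc2b
  -- integrability
  have hint1 : Integrable (fun ω => (Z1 ω - μ1) ^ 2) μ := by
    have h := (hL1.sub (memLp_const μ1)).integrable_sq
    simpa using h
  have hint2 : Integrable (fun ω => (Z2 ω - μ2) ^ 2) μ := by
    have h := (hL2.sub (memLp_const μ2)).integrable_sq
    simpa using h
  have hG : Integrable (fun ω => K * (Z1 ω - μ1) ^ 2 + c2 * (Z2 ω - μ2) ^ 2) μ :=
    (hint1.const_mul K).add (hint2.const_mul c2)
  have hTmeas : Measurable fun ω => (max 0 (min 1 (Z1 ω / Z2 ω)) - μ1 / μ2) ^ 2 := by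
    apply Measurable.pow_const
    exact (measurable_const.max (measurable_const.min (hZ1.div hZ2))).sub measurable_const
  have hf : Integrable (fun ω => (max 0 (min 1 (Z1 ω / Z2 ω)) - μ1 / μ2) ^ 2) μ := by
    refine ⟨hTmeas.aestronglyMeasurable, ?_⟩
    apply HasFiniteIntegral.of_bounded (C := (1:ℝ))
    apply ae_of_all
    intro ω
    have hT0 : (0:ℝ) ≤ max 0 (min 1 (Z1 ω / Z2 ω)) := le_max_left _ _
    have hT1 : max 0 (min 1 (Z1 ω / Z2 ω)) ≤ 1 := max_le (by norm_num) (min_le_left _ _)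
    rw [Real.norm_eq_abs, abs_of_nonneg (sq_nonneg _)]
    exact sq_sub_le_one hT0 hT1 hr0 hr1
  -- variance identities
  have hVar1 : V1 = ∫ ω, (Z1 ω - μ1) ^ 2 ∂μ := by
    rw [hV1def, variance_eq_integral hZ1.aemeasurable, ← hμ1def]
  have hVar2 : V2 = ∫ ω, (Z2 ω - μ2) ^ 2 ∂μ := by
    rw [hV2def, variance_eq_integral hZ2.aemeasurable, ← hμ2def]
  have hIG : (∫ ω, (K * (Z1 ω - μ1) ^ 2 + c2 * (Z2 ω - μ2) ^ 2) ∂μ) = K * V1 + c2 * V2 := by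
    rw [integral_add (hint1.const_mul K) (hint2.const_mul c2), integral_const_mul,
      integral_const_mul, ← hVar1, ← hVar2]
  have hmono : (∫ ω, (max 0 (min 1 (Z1 ω / Z2 ω)) - μ1 / μ2) ^ 2 ∂μ) ≤ K * V1 + c2 * V2 := by
    rw [← hIG]
    exact integral_mono hf hG hpt
  refine hmono.trans ?_
  -- algebraic endgame
  have hDm : D = min 1 ((1 - ε2) ^ 4 * |μ2| ^ 4) := by rw [hDdef, hm4]
  have hkey1 : 2 * μ1 ^ 2 / ((1 - ε2) ^ 2 * μ2 ^ 4) * V2 ≤ 4 * |μ1| * M / D := by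
    rw [hb2, hm4, hDm]
    exact alg_key1 |μ1| |μ2| (1 - ε2) V2 M hb0 hbm hm0 hc0 hc1 hV2nn hV2M
  have hbsum : 4 * |μ1| * M / D + 4 * ε1 * M / D = 4 * (|μ1| + ε1) * M / D := by
    rw [← add_div]
    congr 1
    ring
  have hc2V2 : c2 * V2 = ((ε2 * μ2) ^ 2)⁻¹ * V2 + 2 * μ1 ^ 2 / ((1 - ε2) ^ 2 * μ2 ^ 4) * V2 := by
    rw [hc2def]; ring
  by_cases hcase : 2 * ε1 ^ 2 ≤ (1 - ε2) ^ 2 * μ2 ^ 2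
  · have hK : K = (ε1 ^ 2)⁻¹ := by
      apply max_eq_left
      rw [div_le_iff₀ (by positivity), inv_mul_eq_div, le_div_iff₀ (by positivity)]
      linarith only [hcase]
    have h4 : 4 * |μ1| * M / D ≤ 4 * (|μ1| + ε1) * M / D := by
      have hM0 : 0 ≤ M := le_trans hV1nn hV1M
      have hstep : 4 * |μ1| * M ≤ 4 * (|μ1| + ε1) * M := by
        nlinarith only [mul_nonneg hε1p.le hM0]
      rw [div_le_div_iff₀ hD0 hD0]
      nlinarith only [mul_le_mul_of_nonneg_right hstep hD0.le]
    rw [hK, hc2V2]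
    linarith only [hkey1, h4]
  · push_neg at hcase
    have hK : K ≤ (ε1 ^ 2)⁻¹ + 2 / ((1 - ε2) ^ 2 * μ2 ^ 2) := by
      apply max_le
      · have h : (0:ℝ) ≤ 2 / ((1 - ε2) ^ 2 * μ2 ^ 2) := by positivity
        linarith only [h]
      · have h : (0:ℝ) ≤ (ε1 ^ 2)⁻¹ := by positivity
        linarith only [h]
    have hKV1 : K * V1 ≤ (ε1 ^ 2)⁻¹ * V1 + 2 / ((1 - ε2) ^ 2 * μ2 ^ 2) * V1 := by
      have h := mul_le_mul_of_nonneg_right hK hV1nn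
      linarith only [h]
    have hkey2 : 2 / ((1 - ε2) ^ 2 * μ2 ^ 2) * V1 ≤ 4 * ε1 * M / D := by
      rw [hm2, hDm]
      exact alg_key2 ε1 (1 - ε2) |μ2| V1 M hε1p hε1l hc0 hc1 hm0
        (by rw [← hm2]; linarith only [hcase]) hV1nn hV1M
    rw [hc2V2]
    linarith only [hKV1, hbsum ▸ add_le_add hkey1 hkey2]
end

section
/- Let ε, K > 0, q ∈ (0,1), θ ∈ [0,1], and let (ν_0, ν_1) be probability measures on ℝ with ∫ t^2 dν_j(t) ≤ K for j ∈ {0,1} and |μ_1 − μ_0| ≥ ε, where μ_j := ∫ t dν_j(t). For each pair (n_L, n_U) generate labeled pairs (W_i^L, Y_i), i = 1,…,n_L, i.i.d. with Y_i ~ Bernoulli(q) and W_i^L | Y_i = j ~ ν_j, and unlabeled W_u^U, u = 1,…,n_U, i.i.d. ~ θ ν_1 + (1−θ) ν_0, independent of the labeled sample, and let θ̂_R = max(0, min(1, (W̄^U − W̄_0)/(W̄_1 − W̄_0))) (set to 0 when some label class is empty or the denominator is zero), where W̄^U is the unlabeled sample mean and W̄_j the mean of the labeled W's with label j. Then as min(n_L,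 n_U) → ∞, E[(θ̂_R − θ)^2] → 0 and θ̂_R → θ in probability; that is, the trimmed ratio estimator is consistent in L² and in probability. -/
open MeasureTheory ProbabilityTheory ENNReal Finset Filter Topology
open scoped Classical

/-- The law of one labeled pair `(W, Y)`: `Y ~ Bernoulli(q)` and `W | Y = j ~ νj`. -/
noncomputable def labeledLaw {E : Type*} [MeasurableSpace E] (ν0 ν1 : Measure E) (q : ℝ) :
    Measure (E × Bool) :=
  ENNReal.ofReal (1 - q) • ν0.prod (Measure.dirac false)
    + ENNReal.ofReal q • ν1.prod (Measure.dirac true)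

/-- The law of one unlabeled observation: the mixture `θ ν1 + (1-θ) ν0`. -/
noncomputable def mixLaw {E : Type*} [MeasurableSpace E] (ν0 ν1 : Measure E) (θ : ℝ) :
    Measure E :=
  ENNReal.ofReal (1 - θ) • ν0 + ENNReal.ofReal θ • ν1

/-- The joint law of the data: `n_L` i.i.d. labeled pairs and, independently,
`n_U` i.i.d. unlabeled observations drawn from the mixture. -/
noncomputable def dataLaw {E : Type*} [MeasurableSpace E] (nL nU : ℕ)
    (ν0 ν1 : Measure E) (q θ : ℝ) : Measure ((Fin nL → E × Bool) × (Fin nU → E)) :=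
  (Measure.pi fun _ : Fin nL => labeledLaw ν0 ν1 q).prod
    (Measure.pi fun _ : Fin nU => mixLaw ν0 ν1 θ)

/-- The trimmed ratio estimator `max(0, min(1, (W̄ᵁ - W̄₀)/(W̄₁ - W̄₀)))`,
set to `0` when a label class is empty or the denominator vanishes. -/
noncomputable def ratioEst {nL nU : ℕ} (L : Fin nL → ℝ × Bool) (U : Fin nU → ℝ) : ℝ :=
  let A1 := Finset.univ.filter fun i => (L i).2 = true
  let A0 := Finset.univ.filter fun i => (L i).2 = false
  let m1 := (∑ i ∈ A1, (L i).1) / A1.card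
  let m0 := (∑ i ∈ A0, (L i).1) / A0.card
  let mU := (∑ u, U u) / nU
  if A1.Nonempty ∧ A0.Nonempty ∧ m1 - m0 ≠ 0 then
    max 0 (min 1 ((mU - m0) / (m1 - m0)))
  else 0





section EvalHelpers

variable {ι : Type*} [Fintype ι] {α : ι → Type*} [∀ i, MeasurableSpace (α i)]
  (μ : ∀ i, Measure (α i)) [∀ i, IsProbabilityMeasure (μ i)]

lemma measurePreserving_eval_pi (i : ι) :
    MeasurePreserving (Function.eval i) (Measure.pi μ) (μ i) := by
  refine ⟨measurable_pi_apply i, ?_⟩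
  ext s hs
  rw [Measure.map_apply (measurable_pi_apply i) hs, Set.eval_preimage, Measure.pi_pi]
  rw [Finset.prod_eq_single i (fun b _ hb => by
    rw [Function.update_of_ne hb]; exact measure_univ) (by simp)]
  simp

lemma indepFun_eval_pi {i j : ι} (hij : i ≠ j) :
    IndepFun (Function.eval i) (Function.eval j) (Measure.pi μ) := by
  rw [indepFun_iff_measure_inter_preimage_eq_mul]
  intro s t hs ht
  rw [Set.eval_preimage, Set.eval_preimage, ← Set.pi_inter_distrib, Measure.pi_pi,
    Measure.pi_pi, Measure.pi_pi]
  have h1 : ∀ k : ι, k ≠ i → k ≠ j →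
      (μ k) (Function.update (fun _ => Set.univ) i s k ∩
        Function.update (fun _ => Set.univ) j t k) = 1 := by
    intro k hki hkj
    rw [Function.update_of_ne hki, Function.update_of_ne hkj]
    simp
  calc ∏ k, (μ k) (Function.update (fun _ => Set.univ) i s k ∩
        Function.update (fun _ => Set.univ) j t k)
      = ∏ k ∈ ({i, j} : Finset ι), (μ k) (Function.update (fun _ => Set.univ) i s k ∩
        Function.update (fun _ => Set.univ) j t k) := by
        refine (Finset.prod_subset (Finset.subset_univ _) ?_).symm
        intro k _ hk
        simp only [Finset.mem_insert, Finset.mem_singleton, not_or] at hk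
        exact h1 k hk.1 hk.2
    _ = μ i s * μ j t := by
        rw [Finset.prod_pair hij]
        rw [Function.update_self, Function.update_of_ne hij, Function.update_self,
          Function.update_of_ne hij.symm]
        simp
    _ = (∏ k, (μ k) (Function.update (fun _ => Set.univ) i s k)) *
        (∏ k, (μ k) (Function.update (fun _ => Set.univ) j t k)) := by
        rw [Finset.prod_eq_single i (fun b _ hb => by
            rw [Function.update_of_ne hb]; exact measure_univ) (by simp),
          Finset.prod_eq_single j (fun b _ hb => by
            rw [Function.update_of_ne hb]; exact measure_univ) (by simp)]
        simp

end EvalHelpers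

/-- Chebyshev bound for the empirical mean of an i.i.d. sample. -/
lemma cheb_pi {α : Type*} [MeasurableSpace α] (μ : Measure α) [IsProbabilityMeasure μ]
    {f : α → ℝ} (hfm : Measurable f) (hf2 : Integrable (fun x => f x ^ 2) μ)
    {K : ℝ} (hK : ∫ x, f x ^ 2 ∂μ ≤ K)
    {n : ℕ} (hn : 1 ≤ n) {δ : ℝ} (hδ : 0 < δ) :
    (Measure.pi fun _ : Fin n => μ)
      {x | δ ≤ |(∑ i, f (x i)) / n - ∫ x, f x ∂μ|}
      ≤ ENNReal.ofReal (K / (n * δ ^ 2)) := by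
  set P := Measure.pi fun _ : Fin n => μ with hP
  have hmp : ∀ i : Fin n, MeasurePreserving (Function.eval i) P μ := fun i =>
    measurePreserving_eval_pi _ i
  have hL2 : MemLp f 2 μ :=
    (memLp_two_iff_integrable_sq hfm.aestronglyMeasurable).2 hf2
  set X : Fin n → (Fin n → α) → ℝ := fun i x => f (x i) with hX
  have hXm : ∀ i, MemLp (X i) 2 P := fun i => hL2.comp_measurePreserving (hmp i)
  have hint : ∀ (g : α → ℝ), AEStronglyMeasurable g μ →
      ∀ i : Fin n, ∫ x, g (x i) ∂P = ∫ x, g x ∂μ := by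
    intro g hg i
    rw [← (hmp i).map_eq] at hg ⊢
    exact (integral_map (hmp i).measurable.aemeasurable hg).symm
  have hmean : ∀ i, ∫ x, X i x ∂P = ∫ x, f x ∂μ := fun i =>
    hint f hfm.aestronglyMeasurable i
  set m := ∫ x, f x ∂μ with hm
  have hS : MemLp (∑ i, X i) 2 P := memLp_finsetSum' _ (fun i _ => hXm i)
  have hSmean : ∫ x, (∑ i, X i) x ∂P = n * m := by
    simp only [Finset.sum_apply]
    rw [integral_finset_sum _ (fun i _ => (hXm i).integrable one_le_two)]
    simp [hmean, hm]
  have hvar : variance (∑ i, X i) P ≤ n * K := by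
    rw [IndepFun.variance_sum (fun i _ => hXm i)
      (fun i _ j _ hij => (indepFun_eval_pi _ hij).comp hfm hfm)]
    calc ∑ i : Fin n, variance (X i) P ≤ ∑ _i : Fin n, K := by
          refine Finset.sum_le_sum fun i _ => ?_
          refine le_trans (variance_le_expectation_sq (hXm i).aestronglyMeasurable) ?_
          have : ∫ x, (X i x) ^ 2 ∂P = ∫ x, f x ^ 2 ∂μ :=
            hint (fun x => f x ^ 2) (hfm.pow_const 2).aestronglyMeasurable i
          calc P[(X i) ^ 2] = ∫ x, (X i x) ^ 2 ∂P := by simp [Pi.pow_apply]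
            _ ≤ K := this ▸ hK
      _ = n * K := by simp [mul_comm]
  have hnpos : (0:ℝ) < n := by positivity
  have hsub : {x | δ ≤ |(∑ i, f (x i)) / n - m|} ⊆
      {x | (n:ℝ) * δ ≤ |(∑ i, X i) x - P[∑ i, X i]|} := by
    intro x hx
    simp only [Set.mem_setOf_eq] at hx ⊢
    rw [hSmean]
    have : (∑ i, X i) x = ∑ i, f (x i) := by simp [hX]
    rw [this]
    have h2 : (∑ i, f (x i)) - n * m = ((∑ i, f (x i)) / n - m) * n := by
      field_simp
    rw [h2, abs_mul, abs_of_pos hnpos]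
    calc (n:ℝ) * δ = δ * n := mul_comm _ _
      _ ≤ |(∑ i, f (x i)) / n - m| * n := by
          exact mul_le_mul_of_nonneg_right hx hnpos.le
  refine le_trans (measure_mono hsub) ?_
  refine le_trans (meas_ge_le_variance_div_sq hS (by positivity)) ?_
  apply ENNReal.ofReal_le_ofReal
  rw [div_le_div_iff₀ (by positivity) (by positivity)]
  calc variance (∑ i, X i) P * (n * δ ^ 2) ≤ (n * K) * (n * δ ^ 2) := by
        refine mul_le_mul_of_nonneg_right hvar (by positivity)
    _ = K * ((n:ℝ) * δ) ^ 2 := by ring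

section Laws

variable {E : Type*} [MeasurableSpace E] (ν0 ν1 : Measure E)
  [IsProbabilityMeasure ν0] [IsProbabilityMeasure ν1]

lemma isProb_labeledLaw {q : ℝ} (h0 : 0 ≤ q) (h1 : q ≤ 1) :
    IsProbabilityMeasure (labeledLaw ν0 ν1 q) := by
  constructor
  rw [labeledLaw]
  simp only [Measure.coe_add, Measure.coe_smul, Pi.add_apply, Pi.smul_apply, smul_eq_mul]
  rw [measure_univ, measure_univ, mul_one, mul_one, ← ENNReal.ofReal_add (by linarith) h0]
  norm_num

lemma isProb_mixLaw {θ : ℝ} (h0 : 0 ≤ θ) (h1 : θ ≤ 1) :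
    IsProbabilityMeasure (mixLaw ν0 ν1 θ) := by
  constructor
  rw [mixLaw]
  simp only [Measure.coe_add, Measure.coe_smul, Pi.add_apply, Pi.smul_apply, smul_eq_mul]
  rw [measure_univ, measure_univ, mul_one, mul_one, ← ENNReal.ofReal_add (by linarith) h0]
  norm_num

lemma integrable_labeledLaw {q : ℝ} {h : E × Bool → ℝ} (hm : Measurable h)
    (h0 : Integrable (fun w => h (w, false)) ν0)
    (h1 : Integrable (fun w => h (w, true)) ν1) :
    Integrable h (labeledLaw ν0 ν1 q) := by
  rw [labeledLaw, integrable_add_measure]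
  constructor
  · refine Integrable.smul_measure ?_ ENNReal.ofReal_ne_top
    rw [Measure.prod_dirac, integrable_map_measure hm.aestronglyMeasurable
      (measurable_prodMk_right (m := inferInstance)).aemeasurable]
    · exact h0
  · refine Integrable.smul_measure ?_ ENNReal.ofReal_ne_top
    rw [Measure.prod_dirac, integrable_map_measure hm.aestronglyMeasurable
      (measurable_prodMk_right (m := inferInstance)).aemeasurable]
    · exact h1

lemma integral_labeledLaw {q : ℝ} (hq0 : 0 ≤ q) (hq1 : q ≤ 1) {h : E × Bool → ℝ}
    (hm : Measurable h)
    (h0 : Integrable (fun w => h (w, false)) ν0)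
    (h1 : Integrable (fun w => h (w, true)) ν1) :
    ∫ p, h p ∂(labeledLaw ν0 ν1 q)
      = (1 - q) * ∫ w, h (w, false) ∂ν0 + q * ∫ w, h (w, true) ∂ν1 := by
  rw [labeledLaw, integral_add_measure, integral_smul_measure, integral_smul_measure]
  · rw [Measure.prod_dirac, Measure.prod_dirac, integral_map
      (measurable_prodMk_right (m := inferInstance)).aemeasurable
      hm.aestronglyMeasurable,
      integral_map (measurable_prodMk_right (m := inferInstance)).aemeasurable
      hm.aestronglyMeasurable]
    rw [ENNReal.toReal_ofReal (by linarith), ENNReal.toReal_ofReal hq0]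
    simp
  · refine Integrable.smul_measure ?_ ENNReal.ofReal_ne_top
    rw [Measure.prod_dirac, integrable_map_measure hm.aestronglyMeasurable
      (measurable_prodMk_right (m := inferInstance)).aemeasurable]
    exact h0
  · refine Integrable.smul_measure ?_ ENNReal.ofReal_ne_top
    rw [Measure.prod_dirac, integrable_map_measure hm.aestronglyMeasurable
      (measurable_prodMk_right (m := inferInstance)).aemeasurable]
    exact h1

lemma integrable_mixLaw {θ : ℝ} {h : E → ℝ}
    (h0 : Integrable h ν0) (h1 : Integrable h ν1) :
    Integrable h (mixLaw ν0 ν1 θ) := by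
  rw [mixLaw, integrable_add_measure]
  exact ⟨h0.smul_measure ENNReal.ofReal_ne_top, h1.smul_measure ENNReal.ofReal_ne_top⟩

lemma integral_mixLaw {θ : ℝ} (h0' : 0 ≤ θ) (h1' : θ ≤ 1) {h : E → ℝ}
    (h0 : Integrable h ν0) (h1 : Integrable h ν1) :
    ∫ w, h w ∂(mixLaw ν0 ν1 θ) = (1 - θ) * ∫ w, h w ∂ν0 + θ * ∫ w, h w ∂ν1 := by
  rw [mixLaw, integral_add_measure (h0.smul_measure ENNReal.ofReal_ne_top)
    (h1.smul_measure ENNReal.ofReal_ne_top), integral_smul_measure, integral_smul_measure,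
    ENNReal.toReal_ofReal (by linarith), ENNReal.toReal_ofReal h0']
  simp

end Laws

lemma ratioEst_close (q θ m0 m1 : ℝ) (hq : q ∈ Set.Ioo (0:ℝ) 1) (hθ : θ ∈ Set.Icc (0:ℝ) 1)
    (hne : m1 - m0 ≠ 0) {η : ℝ} (hη : 0 < η) :
    ∃ δ > 0, ∀ (nL nU : ℕ), 0 < nL → ∀ (L : Fin nL → ℝ × Bool) (U : Fin nU → ℝ),
      |(∑ i, (if (L i).2 = true then (L i).1 else 0)) / nL - q * m1| < δ →
      |(∑ i, (if (L i).2 = true then (1:ℝ) else 0)) / nL - q| < δ →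
      |(∑ i, (if (L i).2 = false then (L i).1 else 0)) / nL - (1 - q) * m0| < δ →
      |(∑ i, (if (L i).2 = false then (1:ℝ) else 0)) / nL - (1 - q)| < δ →
      |(∑ u, U u) / nU - ((1 - θ) * m0 + θ * m1)| < δ →
      |ratioEst L U - θ| ≤ η := by
  obtain ⟨hq0, hq1⟩ := hq
  have hq0' : q ≠ 0 := ne_of_gt hq0
  have h1q : (0:ℝ) < 1 - q := by linarith
  have h1q' : (1:ℝ) - q ≠ 0 := ne_of_gt h1q
  set pstar : ℝ × ℝ × ℝ × ℝ × ℝ := (q * m1, q, (1 - q) * m0, 1 - q, (1 - θ) * m0 + θ * m1)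
    with hpstar
  set V : ℝ × ℝ × ℝ × ℝ × ℝ → ℝ :=
    fun p => p.1 / p.2.1 - p.2.2.1 / p.2.2.2.1 with hV
  set G : ℝ × ℝ × ℝ × ℝ × ℝ → ℝ :=
    fun p => max 0 (min 1 ((p.2.2.2.2 - p.2.2.1 / p.2.2.2.1) / V p)) with hG
  have hVp : V pstar = m1 - m0 := by
    simp only [hV, hpstar]
    field_simp
  have hGp : G pstar = θ := by
    simp only [hG]
    rw [hVp]
    have h2 : pstar.2.2.2.2 - pstar.2.2.1 / pstar.2.2.2.1 = θ * (m1 - m0) := by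
      simp only [hpstar]
      field_simp
      ring
    rw [h2, mul_div_assoc, div_self hne, mul_one, min_eq_right hθ.2, max_eq_right hθ.1]
  have c1 : ContinuousAt (fun p : ℝ × ℝ × ℝ × ℝ × ℝ => p.1) pstar := continuous_fst.continuousAt
  have c2 : ContinuousAt (fun p : ℝ × ℝ × ℝ × ℝ × ℝ => p.2.1) pstar := continuous_snd.fst.continuousAt
  have c3 : ContinuousAt (fun p : ℝ × ℝ × ℝ × ℝ × ℝ => p.2.2.1) pstar :=
    continuous_snd.snd.fst.continuousAt
  have c4 : ContinuousAt (fun p : ℝ × ℝ × ℝ × ℝ × ℝ => p.2.2.2.1) pstar :=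
    continuous_snd.snd.snd.fst.continuousAt
  have c5 : ContinuousAt (fun p : ℝ × ℝ × ℝ × ℝ × ℝ => p.2.2.2.2) pstar :=
    continuous_snd.snd.snd.snd.continuousAt
  have hVc : ContinuousAt V pstar := (c1.div c2 hq0').sub (c3.div c4 h1q')
  have hVne : V pstar ≠ 0 := hVp ▸ hne
  have hGc : ContinuousAt G pstar := by
    have hinner : ContinuousAt (fun p : ℝ × ℝ × ℝ × ℝ × ℝ =>
        (p.2.2.2.2 - p.2.2.1 / p.2.2.2.1) / V p) pstar :=
      (c5.sub (c3.div c4 h1q')).div hVc hVne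
    have hconst : ContinuousAt (fun _ : ℝ × ℝ × ℝ × ℝ × ℝ => (1:ℝ)) pstar := continuousAt_const
    have hconst0 : ContinuousAt (fun _ : ℝ × ℝ × ℝ × ℝ × ℝ => (0:ℝ)) pstar := continuousAt_const
    exact ContinuousAt.sup hconst0 (ContinuousAt.inf hconst hinner)
  obtain ⟨δ₁, hδ₁, hδ₁p⟩ := Metric.continuousAt_iff.1 hGc η hη
  obtain ⟨δ₂, hδ₂, hδ₂p⟩ := Metric.continuousAt_iff.1 hVc (|m1 - m0|) (abs_pos.2 hne)
  refine ⟨min δ₁ (min δ₂ (min (q / 2) ((1 - q) / 2))), by positivity, ?_⟩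
  intro nL nU hnL L U hb1 hb2 hb3 hb4 hb5
  set T1 := ∑ i, (if (L i).2 = true then (L i).1 else 0) with hT1
  set N1 := ∑ i, (if (L i).2 = true then (1:ℝ) else 0) with hN1
  set T0 := ∑ i, (if (L i).2 = false then (L i).1 else 0) with hT0
  set N0 := ∑ i, (if (L i).2 = false then (1:ℝ) else 0) with hN0
  set p : ℝ × ℝ × ℝ × ℝ × ℝ :=
    (T1 / nL, N1 / nL, T0 / nL, N0 / nL, (∑ u, U u) / nU) with hp
  have hnL' : (nL : ℝ) ≠ 0 := Nat.cast_ne_zero.2 hnL.ne'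
  have hd1 : |p.1 - pstar.1| < min δ₁ (min δ₂ (min (q / 2) ((1 - q) / 2))) := hb1
  have hd2 : |p.2.1 - pstar.2.1| < min δ₁ (min δ₂ (min (q / 2) ((1 - q) / 2))) := hb2
  have hd3 : |p.2.2.1 - pstar.2.2.1| < min δ₁ (min δ₂ (min (q / 2) ((1 - q) / 2))) := hb3
  have hd4 : |p.2.2.2.1 - pstar.2.2.2.1| < min δ₁ (min δ₂ (min (q / 2) ((1 - q) / 2))) := hb4
  have hd5 : |p.2.2.2.2 - pstar.2.2.2.2| < min δ₁ (min δ₂ (min (q / 2) ((1 - q) / 2))) := hb5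
  have hdist : dist p pstar < min δ₁ (min δ₂ (min (q / 2) ((1 - q) / 2))) := by
    rw [Prod.dist_eq, Prod.dist_eq, Prod.dist_eq, Prod.dist_eq]
    simp only [Real.dist_eq]
    exact max_lt hd1 (max_lt hd2 (max_lt hd3 (max_lt hd4 hd5)))
  have hdistδ₁ : dist p pstar < δ₁ := lt_of_lt_of_le hdist (min_le_left _ _)
  have hdistδ₂ : dist p pstar < δ₂ :=
    lt_of_lt_of_le hdist (le_trans (min_le_right _ _) (min_le_left _ _))
  -- positivity of class frequencies
  have hb1pos : 0 < p.2.1 := by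
    have : |p.2.1 - q| < q / 2 := lt_of_lt_of_le hd2 (by
      refine le_trans (min_le_right _ _) (le_trans (min_le_right _ _) (min_le_left _ _)))
    have := abs_lt.1 this
    linarith [this.1]
  have hb0pos : 0 < p.2.2.2.1 := by
    have : |p.2.2.2.1 - (1 - q)| < (1 - q) / 2 := lt_of_lt_of_le hd4 (by
      refine le_trans (min_le_right _ _) (le_trans (min_le_right _ _) (min_le_right _ _)))
    have := abs_lt.1 this
    linarith [this.1]
  have hN1pos : 0 < N1 := by
    have hnLpos : (0:ℝ) < nL := by positivity
    have h' : 0 < N1 / (nL:ℝ) := hb1pos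
    have := mul_pos h' hnLpos
    rwa [div_mul_cancel₀ _ hnL'] at this
  have hN0pos : 0 < N0 := by
    have hnLpos : (0:ℝ) < nL := by positivity
    have h' : 0 < N0 / (nL:ℝ) := hb0pos
    have := mul_pos h' hnLpos
    rwa [div_mul_cancel₀ _ hnL'] at this
  have hVne' : V p ≠ 0 := by
    intro h0
    have := hδ₂p hdistδ₂
    rw [h0, hVp, dist_zero_left, Real.norm_eq_abs] at this
    exact lt_irrefl _ this
  -- identify ratioEst with G p
  set A1 := Finset.univ.filter fun i => (L i).2 = true with hA1
  set A0 := Finset.univ.filter fun i => (L i).2 = false with hA0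
  have hcard1 : (A1.card : ℝ) = N1 := by
    rw [hA1, hN1, ← Finset.sum_boole]
  have hcard0 : (A0.card : ℝ) = N0 := by
    rw [hA0, hN0, ← Finset.sum_boole]
  have hsum1 : ∑ i ∈ A1, (L i).1 = T1 := by rw [hA1, hT1, Finset.sum_filter]
  have hsum0 : ∑ i ∈ A0, (L i).1 = T0 := by rw [hA0, hT0, Finset.sum_filter]
  have hN1ne : N1 ≠ 0 := ne_of_gt hN1pos
  have hN0ne : N0 ≠ 0 := ne_of_gt hN0pos
  have hdiv1 : p.1 / p.2.1 = T1 / N1 := div_div_div_cancel_right₀ hnL' T1 N1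
  have hdiv0 : p.2.2.1 / p.2.2.2.1 = T0 / N0 := div_div_div_cancel_right₀ hnL' T0 N0
  have hA1ne : A1.Nonempty := by
    rw [← Finset.card_pos]
    have : (0:ℝ) < (A1.card : ℝ) := hcard1 ▸ hN1pos
    exact_mod_cast this
  have hA0ne : A0.Nonempty := by
    rw [← Finset.card_pos]
    have : (0:ℝ) < (A0.card : ℝ) := hcard0 ▸ hN0pos
    exact_mod_cast this
  have hVpval : V p = T1 / N1 - T0 / N0 := by
    have h : V p = p.1 / p.2.1 - p.2.2.1 / p.2.2.2.1 := rfl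
    rw [h, hdiv1, hdiv0]
  have hden : T1 / N1 - T0 / N0 ≠ 0 := hVpval ▸ hVne'
  have hEst : ratioEst L U = G p := by
    rw [ratioEst]
    simp only [← hA1, ← hA0, hsum1, hsum0, hcard1, hcard0]
    rw [if_pos ⟨hA1ne, hA0ne, hden⟩]
    have h : G p = max 0 (min 1 ((p.2.2.2.2 - p.2.2.1 / p.2.2.2.1) / V p)) := rfl
    rw [h, hdiv0, hVpval]
  rw [hEst]
  have := hδ₁p hdistδ₁
  rw [hGp, Real.dist_eq] at this
  exact le_of_lt this


lemma ratioEst_mem {nL nU : ℕ} (L : Fin nL → ℝ × Bool) (U : Fin nU → ℝ) :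
    0 ≤ ratioEst L U ∧ ratioEst L U ≤ 1 := by
  unfold ratioEst
  simp only []
  split_ifs with h
  · exact ⟨le_max_left _ _, max_le zero_le_one (min_le_left _ _)⟩
  · exact ⟨le_rfl, zero_le_one⟩

set_option maxHeartbeats 2000000 in
/-- the trimmed ratio estimator is consistent in `L²` and in
probability as `min(n_L, n_U) → ∞` (i.e. along `atTop` on `ℕ × ℕ`). -/
theorem stmt_5 (ε K q θ : ℝ) (hε : 0 < ε) (hK : 0 < K)
    (hq : q ∈ Set.Ioo (0 : ℝ) 1) (hθ : θ ∈ Set.Icc (0 : ℝ) 1)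
    (ν0 ν1 : Measure ℝ) [IsProbabilityMeasure ν0] [IsProbabilityMeasure ν1]
    (hsq0 : (∫⁻ t, ENNReal.ofReal (t ^ 2) ∂ν0) ≤ ENNReal.ofReal K)
    (hsq1 : (∫⁻ t, ENNReal.ofReal (t ^ 2) ∂ν1) ≤ ENNReal.ofReal K)
    (hsep : ε ≤ |(∫ t, t ∂ν1) - ∫ t, t ∂ν0|) :
    Tendsto
        (fun p : ℕ × ℕ =>
          ∫⁻ ω, ENNReal.ofReal ((ratioEst ω.1 ω.2 - θ) ^ 2)
            ∂(dataLaw p.1 p.2 ν0 ν1 q θ))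
        atTop (nhds 0) ∧
      ∀ η : ℝ, 0 < η →
        Tendsto
          (fun p : ℕ × ℕ =>
            dataLaw p.1 p.2 ν0 ν1 q θ {ω | η < |ratioEst ω.1 ω.2 - θ|})
          atTop (nhds 0) := by
  obtain ⟨hq0, hq1⟩ := hq
  obtain ⟨hθ0, hθ1⟩ := hθ
  set m0 : ℝ := ∫ t, t ∂ν0 with hm0def
  set m1 : ℝ := ∫ t, t ∂ν1 with hm1def
  have hne : m1 - m0 ≠ 0 := abs_pos.1 (lt_of_lt_of_le hε hsep)
  have nu_facts : ∀ (ν : Measure ℝ), IsProbabilityMeasure ν →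
      (∫⁻ t, ENNReal.ofReal (t ^ 2) ∂ν) ≤ ENNReal.ofReal K →
      Integrable (fun t => t ^ 2) ν ∧ (∫ t, t ^ 2 ∂ν) ≤ K ∧ Integrable (fun t : ℝ => t) ν := by
    intro ν _ hsq
    have hmeas : Measurable fun t : ℝ => t ^ 2 := measurable_id.pow_const 2
    have hint : Integrable (fun t => t ^ 2) ν := by
      refine ⟨hmeas.aestronglyMeasurable, ?_⟩
      rw [hasFiniteIntegral_iff_ofReal (ae_of_all _ fun t => sq_nonneg t)]
      exact lt_of_le_of_lt hsq ENNReal.ofReal_lt_top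
    have hIK : ∫ t, t ^ 2 ∂ν ≤ K := by
      rw [integral_eq_lintegral_of_nonneg_ae (ae_of_all _ fun t => sq_nonneg t)
        hmeas.aestronglyMeasurable]
      exact ENNReal.toReal_le_of_le_ofReal hK.le hsq
    have hid : Integrable (fun t : ℝ => t) ν :=
      ((memLp_two_iff_integrable_sq measurable_id.aestronglyMeasurable).2 hint).integrable
        one_le_two
    exact ⟨hint, hIK, hid⟩
  obtain ⟨hsqint0, hIK0, hid0⟩ := nu_facts ν0 inferInstance hsq0
  obtain ⟨hsqint1, hIK1, hid1⟩ := nu_facts ν1 inferInstance hsq1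
  have hsqnn0 : (0:ℝ) ≤ ∫ t, t ^ 2 ∂ν0 := integral_nonneg fun t => sq_nonneg t
  have hsqnn1 : (0:ℝ) ≤ ∫ t, t ^ 2 ∂ν1 := integral_nonneg fun t => sq_nonneg t
  haveI iLL : IsProbabilityMeasure (labeledLaw ν0 ν1 q) := isProb_labeledLaw ν0 ν1 hq0.le hq1.le
  haveI iMM : IsProbabilityMeasure (mixLaw ν0 ν1 θ) := isProb_mixLaw ν0 ν1 hθ0 hθ1
  haveI iDL : ∀ nL nU : ℕ, IsProbabilityMeasure (dataLaw nL nU ν0 ν1 q θ) := by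
    intro nL nU
    unfold dataLaw
    infer_instance
  set C : ℝ := K + 1 with hCdef
  have hC0 : 0 < C := by positivity
  -- the four labeled statistics
  set f1 : ℝ × Bool → ℝ := fun r => if r.2 = true then r.1 else 0 with hf1def
  set g1 : ℝ × Bool → ℝ := fun r => if r.2 = true then (1:ℝ) else 0 with hg1def
  set f0 : ℝ × Bool → ℝ := fun r => if r.2 = false then r.1 else 0 with hf0def
  set g0 : ℝ × Bool → ℝ := fun r => if r.2 = false then (1:ℝ) else 0 with hg0def
  have hbT : MeasurableSet {r : ℝ × Bool | r.2 = true} :=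
    measurable_snd (measurableSet_singleton true)
  have hbF : MeasurableSet {r : ℝ × Bool | r.2 = false} :=
    measurable_snd (measurableSet_singleton false)
  have hf1m : Measurable f1 := by
    rw [hf1def]; exact Measurable.ite hbT measurable_fst measurable_const
  have hg1m : Measurable g1 := by
    rw [hg1def]; exact Measurable.ite hbT measurable_const measurable_const
  have hf0m : Measurable f0 := by
    rw [hf0def]; exact Measurable.ite hbF measurable_fst measurable_const
  have hg0m : Measurable g0 := by
    rw [hg0def]; exact Measurable.ite hbF measurable_const measurable_const
  -- integrability of components
  have if1F : Integrable (fun w => f1 (w, false)) ν0 := by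
    have : (fun w : ℝ => f1 (w, false)) = fun _ => (0:ℝ) := by funext w; simp [hf1def]
    rw [this]; exact integrable_const 0
  have if1T : Integrable (fun w => f1 (w, true)) ν1 := by
    have : (fun w : ℝ => f1 (w, true)) = fun w => w := by funext w; simp [hf1def]
    rw [this]; exact hid1
  have ig1F : Integrable (fun w => g1 (w, false)) ν0 := by
    have : (fun w : ℝ => g1 (w, false)) = fun _ => (0:ℝ) := by funext w; simp [hg1def]
    rw [this]; exact integrable_const 0
  have ig1T : Integrable (fun w => g1 (w, true)) ν1 := by
    have : (fun w : ℝ => g1 (w, true)) = fun _ => (1:ℝ) := by funext w; simp [hg1def]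
    rw [this]; exact integrable_const 1
  have if0F : Integrable (fun w => f0 (w, false)) ν0 := by
    have : (fun w : ℝ => f0 (w, false)) = fun w => w := by funext w; simp [hf0def]
    rw [this]; exact hid0
  have if0T : Integrable (fun w => f0 (w, true)) ν1 := by
    have : (fun w : ℝ => f0 (w, true)) = fun _ => (0:ℝ) := by funext w; simp [hf0def]
    rw [this]; exact integrable_const 0
  have ig0F : Integrable (fun w => g0 (w, false)) ν0 := by
    have : (fun w : ℝ => g0 (w, false)) = fun _ => (1:ℝ) := by funext w; simp [hg0def]
    rw [this]; exact integrable_const 1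
  have ig0T : Integrable (fun w => g0 (w, true)) ν1 := by
    have : (fun w : ℝ => g0 (w, true)) = fun _ => (0:ℝ) := by funext w; simp [hg0def]
    rw [this]; exact integrable_const 0
  have if1F2 : Integrable (fun w => f1 (w, false) ^ 2) ν0 := by
    have : (fun w : ℝ => f1 (w, false) ^ 2) = fun _ => (0:ℝ) := by funext w; simp [hf1def]
    rw [this]; exact integrable_const 0
  have if1T2 : Integrable (fun w => f1 (w, true) ^ 2) ν1 := by
    have : (fun w : ℝ => f1 (w, true) ^ 2) = fun w => w ^ 2 := by funext w; simp [hf1def]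
    rw [this]; exact hsqint1
  have ig1F2 : Integrable (fun w => g1 (w, false) ^ 2) ν0 := by
    have : (fun w : ℝ => g1 (w, false) ^ 2) = fun _ => (0:ℝ) := by funext w; simp [hg1def]
    rw [this]; exact integrable_const 0
  have ig1T2 : Integrable (fun w => g1 (w, true) ^ 2) ν1 := by
    have : (fun w : ℝ => g1 (w, true) ^ 2) = fun _ => (1:ℝ) := by funext w; simp [hg1def]
    rw [this]; exact integrable_const 1
  have if0F2 : Integrable (fun w => f0 (w, false) ^ 2) ν0 := by
    have : (fun w : ℝ => f0 (w, false) ^ 2) = fun w => w ^ 2 := by funext w; simp [hf0def]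
    rw [this]; exact hsqint0
  have if0T2 : Integrable (fun w => f0 (w, true) ^ 2) ν1 := by
    have : (fun w : ℝ => f0 (w, true) ^ 2) = fun _ => (0:ℝ) := by funext w; simp [hf0def]
    rw [this]; exact integrable_const 0
  have ig0F2 : Integrable (fun w => g0 (w, false) ^ 2) ν0 := by
    have : (fun w : ℝ => g0 (w, false) ^ 2) = fun _ => (1:ℝ) := by funext w; simp [hg0def]
    rw [this]; exact integrable_const 1
  have ig0T2 : Integrable (fun w => g0 (w, true) ^ 2) ν1 := by
    have : (fun w : ℝ => g0 (w, true) ^ 2) = fun _ => (0:ℝ) := by funext w; simp [hg0def]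
    rw [this]; exact integrable_const 0
  -- mean values
  have e_f1 : ∫ p, f1 p ∂(labeledLaw ν0 ν1 q) = q * m1 := by
    rw [integral_labeledLaw ν0 ν1 hq0.le hq1.le hf1m if1F if1T,
      show (fun w : ℝ => f1 (w, false)) = (fun _ => (0:ℝ)) from funext fun w => by
        simp [hf1def],
      show (fun w : ℝ => f1 (w, true)) = (fun w : ℝ => w) from funext fun w => by
        simp [hf1def]]
    simp [hm1def]
  have e_g1 : ∫ p, g1 p ∂(labeledLaw ν0 ν1 q) = q := by
    rw [integral_labeledLaw ν0 ν1 hq0.le hq1.le hg1m ig1F ig1T,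
      show (fun w : ℝ => g1 (w, false)) = (fun _ => (0:ℝ)) from funext fun w => by
        simp [hg1def],
      show (fun w : ℝ => g1 (w, true)) = (fun _ => (1:ℝ)) from funext fun w => by
        simp [hg1def]]
    simp
  have e_f0 : ∫ p, f0 p ∂(labeledLaw ν0 ν1 q) = (1 - q) * m0 := by
    rw [integral_labeledLaw ν0 ν1 hq0.le hq1.le hf0m if0F if0T,
      show (fun w : ℝ => f0 (w, false)) = (fun w : ℝ => w) from funext fun w => by
        simp [hf0def],
      show (fun w : ℝ => f0 (w, true)) = (fun _ => (0:ℝ)) from funext fun w => by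
        simp [hf0def]]
    simp [hm0def]
  have e_g0 : ∫ p, g0 p ∂(labeledLaw ν0 ν1 q) = 1 - q := by
    rw [integral_labeledLaw ν0 ν1 hq0.le hq1.le hg0m ig0F ig0T,
      show (fun w : ℝ => g0 (w, false)) = (fun _ => (1:ℝ)) from funext fun w => by
        simp [hg0def],
      show (fun w : ℝ => g0 (w, true)) = (fun _ => (0:ℝ)) from funext fun w => by
        simp [hg0def]]
    simp
  have e_U : ∫ t, t ∂(mixLaw ν0 ν1 θ) = (1 - θ) * m0 + θ * m1 := by
    have e := integral_mixLaw ν0 ν1 hθ0 hθ1 hid0 hid1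
    rw [← hm0def, ← hm1def] at e
    exact e
  -- second moments
  have isq_f1 : Integrable (fun p => f1 p ^ 2) (labeledLaw ν0 ν1 q) :=
    integrable_labeledLaw ν0 ν1 (hf1m.pow_const 2) if1F2 if1T2
  have isq_g1 : Integrable (fun p => g1 p ^ 2) (labeledLaw ν0 ν1 q) :=
    integrable_labeledLaw ν0 ν1 (hg1m.pow_const 2) ig1F2 ig1T2
  have isq_f0 : Integrable (fun p => f0 p ^ 2) (labeledLaw ν0 ν1 q) :=
    integrable_labeledLaw ν0 ν1 (hf0m.pow_const 2) if0F2 if0T2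
  have isq_g0 : Integrable (fun p => g0 p ^ 2) (labeledLaw ν0 ν1 q) :=
    integrable_labeledLaw ν0 ν1 (hg0m.pow_const 2) ig0F2 ig0T2
  have isq_U : Integrable (fun t => t ^ 2) (mixLaw ν0 ν1 θ) :=
    integrable_mixLaw ν0 ν1 hsqint0 hsqint1
  have esq_f1 : ∫ p, f1 p ^ 2 ∂(labeledLaw ν0 ν1 q) ≤ C := by
    rw [integral_labeledLaw ν0 ν1 hq0.le hq1.le (hf1m.pow_const 2) if1F2 if1T2,
      show (fun w : ℝ => f1 (w, false) ^ 2) = (fun _ => (0:ℝ)) from funext fun w => by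
        simp [hf1def],
      show (fun w : ℝ => f1 (w, true) ^ 2) = (fun w : ℝ => w ^ 2) from funext fun w => by
        simp [hf1def]]
    simp only [integral_zero, mul_zero, zero_add, hCdef]
    nlinarith [mul_le_mul_of_nonneg_left hIK1 hq0.le, hq1.le, hK.le, hsqnn1]
  have esq_g1 : ∫ p, g1 p ^ 2 ∂(labeledLaw ν0 ν1 q) ≤ C := by
    rw [integral_labeledLaw ν0 ν1 hq0.le hq1.le (hg1m.pow_const 2) ig1F2 ig1T2,
      show (fun w : ℝ => g1 (w, false) ^ 2) = (fun _ => (0:ℝ)) from funext fun w => by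
        simp [hg1def],
      show (fun w : ℝ => g1 (w, true) ^ 2) = (fun _ => (1:ℝ)) from funext fun w => by
        simp [hg1def]]
    simp only [integral_zero, mul_zero, zero_add, integral_const, measure_univ,
      ENNReal.toReal_one, probReal_univ, smul_eq_mul, one_mul, mul_one, hCdef]
    nlinarith [hq1.le, hK.le]
  have esq_f0 : ∫ p, f0 p ^ 2 ∂(labeledLaw ν0 ν1 q) ≤ C := by
    rw [integral_labeledLaw ν0 ν1 hq0.le hq1.le (hf0m.pow_const 2) if0F2 if0T2,
      show (fun w : ℝ => f0 (w, false) ^ 2) = (fun w : ℝ => w ^ 2) from funext fun w => by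
        simp [hf0def],
      show (fun w : ℝ => f0 (w, true) ^ 2) = (fun _ => (0:ℝ)) from funext fun w => by
        simp [hf0def]]
    simp only [integral_zero, mul_zero, add_zero, hCdef]
    nlinarith [mul_le_mul_of_nonneg_left hIK0 (by linarith : (0:ℝ) ≤ 1 - q), hq0.le,
      hK.le, hsqnn0]
  have esq_g0 : ∫ p, g0 p ^ 2 ∂(labeledLaw ν0 ν1 q) ≤ C := by
    rw [integral_labeledLaw ν0 ν1 hq0.le hq1.le (hg0m.pow_const 2) ig0F2 ig0T2,
      show (fun w : ℝ => g0 (w, false) ^ 2) = (fun _ => (1:ℝ)) from funext fun w => by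
        simp [hg0def],
      show (fun w : ℝ => g0 (w, true) ^ 2) = (fun _ => (0:ℝ)) from funext fun w => by
        simp [hg0def]]
    simp only [integral_zero, mul_zero, add_zero, integral_const, measure_univ,
      ENNReal.toReal_one, probReal_univ, smul_eq_mul, one_mul, mul_one, hCdef]
    nlinarith [hq0.le, hK.le]
  have esq_U : ∫ t, t ^ 2 ∂(mixLaw ν0 ν1 θ) ≤ C := by
    have e := integral_mixLaw ν0 ν1 hθ0 hθ1 hsqint0 hsqint1
    rw [e, hCdef]
    nlinarith [mul_le_mul_of_nonneg_left hIK0 (by linarith : (0:ℝ) ≤ 1 - θ),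
      mul_le_mul_of_nonneg_left hIK1 hθ0, hK.le]
  -- marginals of the data law
  have hmargL : ∀ (nL nU : ℕ) (B : Set (Fin nL → ℝ × Bool)),
      dataLaw nL nU ν0 ν1 q θ (Prod.fst ⁻¹' B)
        = (Measure.pi fun _ : Fin nL => labeledLaw ν0 ν1 q) B := by
    intro nL nU B
    rw [dataLaw, ← Set.prod_univ, Measure.prod_prod, measure_univ, mul_one]
  have hmargU : ∀ (nL nU : ℕ) (B : Set (Fin nU → ℝ)),
      dataLaw nL nU ν0 ν1 q θ (Prod.snd ⁻¹' B)
        = (Measure.pi fun _ : Fin nU => mixLaw ν0 ν1 θ) B := by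
    intro nL nU B
    rw [dataLaw, ← Set.univ_prod, Measure.prod_prod, measure_univ, one_mul]
  -- the convergence in probability
  have hprob : ∀ η : ℝ, 0 < η →
      Tendsto (fun p : ℕ × ℕ =>
          dataLaw p.1 p.2 ν0 ν1 q θ {ω | η < |ratioEst ω.1 ω.2 - θ|})
        atTop (𝓝 0) := by
    intro η hη
    obtain ⟨δ, hδpos, hD⟩ := ratioEst_close q θ m0 m1 ⟨hq0, hq1⟩ ⟨hθ0, hθ1⟩ hne hη
    have key : ∀ nL nU : ℕ, 1 ≤ nL → 1 ≤ nU →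
        dataLaw nL nU ν0 ν1 q θ {ω | η < |ratioEst ω.1 ω.2 - θ|} ≤
          ENNReal.ofReal (C / (nL * δ ^ 2)) + ENNReal.ofReal (C / (nL * δ ^ 2)) +
          ENNReal.ofReal (C / (nL * δ ^ 2)) + ENNReal.ofReal (C / (nL * δ ^ 2)) +
          ENNReal.ofReal (C / (nU * δ ^ 2)) := by
      intro nL nU hnL hnU
      set S1 : Set (Fin nL → ℝ × Bool) :=
        {x | δ ≤ |(∑ i, f1 (x i)) / nL - ∫ p, f1 p ∂(labeledLaw ν0 ν1 q)|} with hS1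
      set S2 : Set (Fin nL → ℝ × Bool) :=
        {x | δ ≤ |(∑ i, g1 (x i)) / nL - ∫ p, g1 p ∂(labeledLaw ν0 ν1 q)|} with hS2
      set S3 : Set (Fin nL → ℝ × Bool) :=
        {x | δ ≤ |(∑ i, f0 (x i)) / nL - ∫ p, f0 p ∂(labeledLaw ν0 ν1 q)|} with hS3
      set S4 : Set (Fin nL → ℝ × Bool) :=
        {x | δ ≤ |(∑ i, g0 (x i)) / nL - ∫ p, g0 p ∂(labeledLaw ν0 ν1 q)|} with hS4
      set S5 : Set (Fin nU → ℝ) :=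
        {x | δ ≤ |(∑ i, (fun t : ℝ => t) (x i)) / nU - ∫ t, t ∂(mixLaw ν0 ν1 θ)|} with hS5
      have hsub : {ω : (Fin nL → ℝ × Bool) × (Fin nU → ℝ) | η < |ratioEst ω.1 ω.2 - θ|} ⊆
          Prod.fst ⁻¹' S1 ∪ Prod.fst ⁻¹' S2 ∪ Prod.fst ⁻¹' S3 ∪ Prod.fst ⁻¹' S4 ∪
            Prod.snd ⁻¹' S5 := by
        intro ω hω
        by_contra hc
        simp only [Set.mem_union, Set.mem_preimage, hS1, hS2, hS3, hS4, hS5,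
          Set.mem_setOf_eq, not_or, not_le] at hc
        obtain ⟨⟨⟨⟨h1, h2⟩, h3⟩, h4⟩, h5⟩ := hc
        rw [e_f1] at h1
        rw [e_g1] at h2
        rw [e_f0] at h3
        rw [e_g0] at h4
        rw [e_U] at h5
        simp only [hf1def] at h1
        simp only [hg1def] at h2
        simp only [hf0def] at h3
        simp only [hg0def] at h4
        have hest := hD nL nU (by omega) ω.1 ω.2 h1 h2 h3 h4 h5
        simp only [Set.mem_setOf_eq] at hω
        linarith
      refine le_trans (measure_mono hsub) ?_
      refine le_trans (measure_union_le _ _) (add_le_add ?_ ?_)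
      · refine le_trans (measure_union_le _ _) (add_le_add ?_ ?_)
        · refine le_trans (measure_union_le _ _) (add_le_add ?_ ?_)
          · refine le_trans (measure_union_le _ _) (add_le_add ?_ ?_)
            · rw [hmargL]
              exact cheb_pi _ hf1m isq_f1 esq_f1 hnL hδpos
            · rw [hmargL]
              exact cheb_pi _ hg1m isq_g1 esq_g1 hnL hδpos
          · rw [hmargL]
            exact cheb_pi _ hf0m isq_f0 esq_f0 hnL hδpos
        · rw [hmargL]
          exact cheb_pi _ hg0m isq_g0 esq_g0 hnL hδpos
      · rw [hmargU]
        exact cheb_pi _ measurable_id (by exact isq_U) esq_U hnU hδpos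
    have hfst : Tendsto (fun p : ℕ × ℕ => p.1) atTop atTop := by
      rw [← prod_atTop_atTop_eq]; exact tendsto_fst
    have hsnd : Tendsto (fun p : ℕ × ℕ => p.2) atTop atTop := by
      rw [← prod_atTop_atTop_eq]; exact tendsto_snd
    have hnat : Tendsto (fun n : ℕ => ENNReal.ofReal (C / (n * δ ^ 2))) atTop (𝓝 0) := by
      have hre : Tendsto (fun n : ℕ => C / (n * δ ^ 2)) atTop (𝓝 0) := by
        refine (tendsto_const_div_atTop_nhds_zero_nat (C / δ ^ 2)).congr fun n => ?_
        rw [div_div, mul_comm]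
      simpa using ENNReal.tendsto_ofReal hre
    have T1 := hnat.comp hfst
    have T2 := hnat.comp hsnd
    have hbound : Tendsto (fun p : ℕ × ℕ =>
        ENNReal.ofReal (C / (p.1 * δ ^ 2)) + ENNReal.ofReal (C / (p.1 * δ ^ 2)) +
        ENNReal.ofReal (C / (p.1 * δ ^ 2)) + ENNReal.ofReal (C / (p.1 * δ ^ 2)) +
        ENNReal.ofReal (C / (p.2 * δ ^ 2))) atTop (𝓝 0) := by
      have := (((T1.add T1).add T1).add T1).add T2
      simpa using this
    refine tendsto_of_tendsto_of_tendsto_of_le_of_le' tendsto_const_nhds hbound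
      (Eventually.of_forall fun _ => zero_le) ?_
    filter_upwards [hfst.eventually_ge_atTop 1, hsnd.eventually_ge_atTop 1] with p h1 h2
    exact key p.1 p.2 h1 h2
  refine ⟨?_, hprob⟩
  -- L² convergence
  rw [ENNReal.tendsto_nhds_zero]
  intro ε' hε'
  set ε'' : ℝ≥0∞ := min ε' 1 with hε''def
  have hε''pos : 0 < ε'' := lt_min hε' zero_lt_one
  have hε''ne : ε'' ≠ ⊤ := ne_top_of_le_ne_top one_ne_top (min_le_right _ _)
  set e : ℝ := ε''.toReal with hedef
  have he : 0 < e := ENNReal.toReal_pos hε''pos.ne' hε''ne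
  set η : ℝ := Real.sqrt (e / 2) with hηdef
  have hηpos : 0 < η := Real.sqrt_pos.2 (by positivity)
  have hofη : ENNReal.ofReal (η ^ 2) = ε'' / 2 := by
    rw [hηdef, Real.sq_sqrt (by positivity), hedef,
      ENNReal.ofReal_div_of_pos two_pos, ENNReal.ofReal_toReal hε''ne,
      ENNReal.ofReal_ofNat]
  have hev := (ENNReal.tendsto_nhds_zero.1 (hprob η hηpos)) (ε'' / 2)
    (ENNReal.half_pos hε''pos.ne')
  filter_upwards [hev] with p hp
  haveI := iDL p.1 p.2
  calc ∫⁻ ω, ENNReal.ofReal ((ratioEst ω.1 ω.2 - θ) ^ 2) ∂(dataLaw p.1 p.2 ν0 ν1 q θ)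
      ≤ ∫⁻ ω, (ENNReal.ofReal (η ^ 2) +
          Set.indicator {ω' : (Fin p.1 → ℝ × Bool) × (Fin p.2 → ℝ) |
            η < |ratioEst ω'.1 ω'.2 - θ|} (fun _ => 1) ω)
          ∂(dataLaw p.1 p.2 ν0 ν1 q θ) := by
        refine lintegral_mono fun ω => ?_
        by_cases hB : η < |ratioEst ω.1 ω.2 - θ|
        · have hBmem : ω ∈ {ω' : (Fin p.1 → ℝ × Bool) × (Fin p.2 → ℝ) |
              η < |ratioEst ω'.1 ω'.2 - θ|} := hB
          rw [Set.indicator_of_mem hBmem]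
          have hr := ratioEst_mem ω.1 ω.2
          have h1 : (ratioEst ω.1 ω.2 - θ) ^ 2 ≤ 1 := by nlinarith [hr.1, hr.2]
          calc ENNReal.ofReal ((ratioEst ω.1 ω.2 - θ) ^ 2)
              ≤ ENNReal.ofReal 1 := ENNReal.ofReal_le_ofReal h1
            _ = 1 := ENNReal.ofReal_one
            _ ≤ ENNReal.ofReal (η ^ 2) + 1 := le_add_self
        · have hBmem : ω ∉ {ω' : (Fin p.1 → ℝ × Bool) × (Fin p.2 → ℝ) |
              η < |ratioEst ω'.1 ω'.2 - θ|} := hB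
          rw [Set.indicator_of_notMem hBmem, add_zero]
          refine ENNReal.ofReal_le_ofReal ?_
          have habs : |ratioEst ω.1 ω.2 - θ| ≤ η := not_lt.1 hB
          calc (ratioEst ω.1 ω.2 - θ) ^ 2 = |ratioEst ω.1 ω.2 - θ| ^ 2 := (sq_abs _).symm
            _ ≤ η ^ 2 := by nlinarith [abs_nonneg (ratioEst ω.1 ω.2 - θ)]
    _ = ENNReal.ofReal (η ^ 2) + ∫⁻ ω, Set.indicator {ω' : (Fin p.1 → ℝ × Bool) ×
          (Fin p.2 → ℝ) | η < |ratioEst ω'.1 ω'.2 - θ|} (fun _ => 1) ω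
          ∂(dataLaw p.1 p.2 ν0 ν1 q θ) := by
        rw [lintegral_add_left measurable_const, lintegral_const, measure_univ, mul_one]
    _ ≤ ε'' / 2 + ε'' / 2 := by
        refine add_le_add (le_of_eq hofη) ?_
        refine le_trans (lintegral_indicator_const_le _ 1) ?_
        rw [one_mul]
        exact hp
    _ = ε'' := ENNReal.add_halves ε''
    _ ≤ ε' := min_le_left _ _
end

section
/- Let (X, Y, S, Z) be a random vector on a probability space with X ∈ ℝ^d, Y ∈ {0,1}, S ∈ {0,1}, Z ∈ ℝ^{d_z}, and let g : ℝ^d → ℝ be measurable with g(X) integrable. Assume: (i) weak prior shift, i.e. g(X) is conditionally independent of S given Y; (ii) g(X) is conditionally independent of Z given (Y, S); (iii) P(S = 0) > 0 and P(Y = j, S = 1) > 0 for j ∈ {0,1}. Write μ_j = E[g(X) | Y = j, S = 1]. Then, under the conditional probability measure P(· | S = 0), almost surely E[g(X) | σ(Z)] = μ_0 + (μ_1 − μ_0) · P(Y = 1 | σ(Z)); consequently, if μ_1 ≠ μ_0, then under P(· | S = 0) almost surely P(Y = 1 | σ(Z)) = (E[g(X) | σ(Z)] − μ_0)/(μ_1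 − μ_0). -/
open MeasureTheory ProbabilityTheory

section aux
variable {Ω : Type*} [MeasurableSpace Ω] {ν : Measure Ω} {f : Ω → ℝ} {A : Set Ω}

lemma integrable_cond' [IsFiniteMeasure ν] (hf : Integrable f ν) (hA0 : ν A ≠ 0) :
    Integrable f ν[|A] := by
  unfold ProbabilityTheory.cond
  exact ((integrable_smul_measure (ENNReal.inv_ne_zero.mpr (measure_ne_top ν A))
    (ENNReal.inv_ne_top.mpr hA0)).mpr) hf.restrict

lemma integral_cond_eq [IsFiniteMeasure ν] (f : Ω → ℝ) (hA0 : ν A ≠ 0) :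
    ∫ ω, f ω ∂ν[|A] = (ν A).toReal⁻¹ * ∫ ω in A, f ω ∂ν := by
  unfold ProbabilityTheory.cond
  rw [integral_smul_measure, ENNReal.toReal_inv, smul_eq_mul]

lemma setIntegral_cond_eq [IsFiniteMeasure ν] (f : Ω → ℝ) (hA : MeasurableSet A)
    (B : Set Ω) :
    ∫ ω in B, f ω ∂ν[|A] = (ν A).toReal⁻¹ * ∫ ω in B ∩ A, f ω ∂ν := by
  unfold ProbabilityTheory.cond
  rw [Measure.restrict_smul, integral_smul_measure, ENNReal.toReal_inv, smul_eq_mul,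
    Measure.restrict_restrict' hA]

lemma setIntegral_eq_cond [IsFiniteMeasure ν] (f : Ω → ℝ) (hA0 : ν A ≠ 0) :
    ∫ ω in A, f ω ∂ν = (ν A).toReal * ∫ ω, f ω ∂ν[|A] := by
  rw [integral_cond_eq f hA0, ← mul_assoc,
    mul_inv_cancel₀ (ENNReal.toReal_ne_zero.mpr ⟨hA0, measure_ne_top ν A⟩), one_mul]

lemma condMean_eq_integral_cond [IsFiniteMeasure ν] (f : Ω → ℝ) (hA0 : ν A ≠ 0) :
    condMean ν f A = ∫ ω, f ω ∂ν[|A] := by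
  rw [condMean, setIntegral_eq_cond f hA0, mul_comm, mul_div_assoc,
    div_self (ENNReal.toReal_ne_zero.mpr ⟨hA0, measure_ne_top ν A⟩), mul_one]

lemma indep_integral_cond [IsProbabilityMeasure ν] (hf : Measurable f)
    (hfi : Integrable f ν) (hA : MeasurableSet A) (hA0 : ν A ≠ 0)
    (h : ∀ B, MeasurableSet B → ν (f ⁻¹' B ∩ A) = ν (f ⁻¹' B) * ν A) :
    ∫ ω, f ω ∂ν[|A] = ∫ ω, f ω ∂ν := by
  have hmap : (ν[|A]).map f = ν.map f := by
    ext B hB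
    rw [Measure.map_apply hf hB, Measure.map_apply hf hB, cond_apply hA, Set.inter_comm,
      h B hB, mul_comm (ν (f ⁻¹' B)), ← mul_assoc,
      ENNReal.inv_mul_cancel hA0 (measure_ne_top ν A), one_mul]
  calc ∫ ω, f ω ∂ν[|A] = ∫ x, x ∂((ν[|A]).map f) :=
        (integral_map hf.aemeasurable aestronglyMeasurable_id).symm
    _ = ∫ x, x ∂(ν.map f) := by rw [hmap]
    _ = ∫ ω, f ω ∂ν := integral_map hf.aemeasurable aestronglyMeasurable_id

lemma indep_setIntegral [IsProbabilityMeasure ν] (hf : Measurable f)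
    (hfi : Integrable f ν) (hA : MeasurableSet A)
    (h : ∀ B, MeasurableSet B → ν (f ⁻¹' B ∩ A) = ν (f ⁻¹' B) * ν A) :
    ∫ ω in A, f ω ∂ν = (ν A).toReal * ∫ ω, f ω ∂ν := by
  by_cases hA0 : ν A = 0
  · rw [setIntegral_measure_zero _ hA0, hA0]; simp
  · rw [setIntegral_eq_cond f hA0, indep_integral_cond hf hfi hA hA0 h]

end aux

/-- under weak prior shift and conditional independence of
`g(X)` and `Z` given `(Y, S)`, in the target population (`S = 0`) one has
`E[g(X) | σ(Z)] = μ₀ + (μ₁ - μ₀) P(Y = 1 | σ(Z))` a.s., and hence, when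
`μ₁ ≠ μ₀`, `P(Y = 1 | σ(Z)) = (E[g(X) | σ(Z)] - μ₀)/(μ₁ - μ₀)` a.s. -/
theorem stmt_11 {Ω : Type*} [MeasurableSpace Ω] (μ : Measure Ω) [IsProbabilityMeasure μ]
    {d dz : ℕ} (X : Ω → (Fin d → ℝ)) (Y S : Ω → Bool) (Z : Ω → (Fin dz → ℝ))
    (g : (Fin d → ℝ) → ℝ)
    (hX : Measurable X) (hY : Measurable Y) (hS : Measurable S) (hZ : Measurable Z)
    (hg : Measurable g)
    (hint : Integrable (fun ω => g (X ω)) μ)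
    -- (i) weak prior shift: `g(X)` is conditionally independent of `S` given `Y`
    (hwps : ∀ j : Bool, μ {ω | Y ω = j} ≠ 0 → ∀ (s : Bool) (B : Set ℝ),
      MeasurableSet B →
        μ[|{ω | Y ω = j}] ({ω | g (X ω) ∈ B} ∩ {ω | S ω = s})
          = μ[|{ω | Y ω = j}] {ω | g (X ω) ∈ B} * μ[|{ω | Y ω = j}] {ω | S ω = s})
    -- (ii) `g(X)` is conditionally independent of `Z` given `(Y, S)`
    (hciZ : ∀ (j s : Bool), μ {ω | Y ω = j ∧ S ω = s} ≠ 0 →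
      ∀ (B : Set ℝ) (C : Set (Fin dz → ℝ)), MeasurableSet B → MeasurableSet C →
        μ[|{ω | Y ω = j ∧ S ω = s}] ({ω | g (X ω) ∈ B} ∩ {ω | Z ω ∈ C})
          = μ[|{ω | Y ω = j ∧ S ω = s}] {ω | g (X ω) ∈ B}
            * μ[|{ω | Y ω = j ∧ S ω = s}] {ω | Z ω ∈ C})
    -- (iii) positivity
    (hS0 : μ {ω | S ω = false} ≠ 0)
    (hY0S1 : μ {ω | Y ω = false ∧ S ω = true} ≠ 0)
    (hY1S1 : μ {ω | Y ω = true ∧ S ω = true} ≠ 0) :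
    let μtg : Measure Ω := μ[|{ω | S ω = false}]
    let a0 : ℝ := condMean μ (fun ω => g (X ω)) {ω | Y ω = false ∧ S ω = true}
    let a1 : ℝ := condMean μ (fun ω => g (X ω)) {ω | Y ω = true ∧ S ω = true}
    let mZ : MeasurableSpace Ω := MeasurableSpace.comap Z inferInstance
    (MeasureTheory.condExp mZ μtg (fun ω => g (X ω))
        =ᵐ[μtg] fun ω =>
          a0 + (a1 - a0)
            * MeasureTheory.condExp mZ μtg (fun ω' => if Y ω' = true then (1 : ℝ) else 0) ω) ∧
      (a1 ≠ a0 →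
        MeasureTheory.condExp mZ μtg (fun ω' => if Y ω' = true then (1 : ℝ) else 0)
          =ᵐ[μtg] fun ω =>
            (MeasureTheory.condExp mZ μtg (fun ω' => g (X ω')) ω - a0) / (a1 - a0)) := by
  set gX : Ω → ℝ := fun ω => g (X ω) with hgXdef
  set ν : Measure Ω := μ[|{ω | S ω = false}] with hνdef
  set A0 : ℝ := condMean μ gX {ω | Y ω = false ∧ S ω = true} with hA0def
  set A1 : ℝ := condMean μ gX {ω | Y ω = true ∧ S ω = true} with hA1def
  set indY : Ω → ℝ := fun ω => if Y ω = true then (1 : ℝ) else 0 with hindYdef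
  set φ : Ω → ℝ := fun ω => A0 + (A1 - A0) * indY ω with hφdef
  have hgXm : Measurable gX := hg.comp hX
  have hSf : MeasurableSet {ω | S ω = false} := hS (measurableSet_singleton false)
  have hYm : ∀ j : Bool, MeasurableSet {ω | Y ω = j} := fun j => hY (measurableSet_singleton j)
  have hYSm : ∀ j s : Bool, MeasurableSet {ω | Y ω = j ∧ S ω = s} := fun j s =>
    (hYm j).inter (hS (measurableSet_singleton s))
  haveI hPtg : IsProbabilityMeasure ν := cond_isProbabilityMeasure (μ := μ) hS0
  have hm : MeasurableSpace.comap Z inferInstance ≤ ‹MeasurableSpace Ω› := hZ.comap_le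
  -- Step A
  have hstepA : ∀ (j s : Bool), μ {ω | Y ω = j ∧ S ω = s} ≠ 0 →
      condMean μ gX {ω | Y ω = j ∧ S ω = s} = ∫ ω, gX ω ∂μ[|{ω | Y ω = j}] := by
    intro j s hne
    have hYj0 : μ {ω | Y ω = j} ≠ 0 := fun h0 => hne (measure_mono_null (fun ω hω => hω.1) h0)
    haveI := cond_isProbabilityMeasure (μ := μ) hYj0
    have hSs : MeasurableSet {ω | S ω = s} := hS (measurableSet_singleton s)
    have hccc : μ[|{ω | Y ω = j}][|{ω | S ω = s}] = μ[|{ω | Y ω = j ∧ S ω = s}] := by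
      rw [cond_cond_eq_cond_inter (hYm j) hSs]
      congr 1
    have hc0 : μ[|{ω | Y ω = j}] {ω | S ω = s} ≠ 0 := by
      rw [cond_apply (hYm j)]
      exact mul_ne_zero (ENNReal.inv_ne_zero.mpr (measure_ne_top μ _)) hne
    rw [condMean_eq_integral_cond gX hne, ← hccc]
    exact indep_integral_cond hgXm (integrable_cond' hint hYj0) hSs hc0
      (fun B hB => hwps j hYj0 s B hB)
  -- Step B
  have hstepB : ∀ (j : Bool) (C : Set (Fin dz → ℝ)), MeasurableSet C →
      ∫ ω in Z ⁻¹' C ∩ {ω | Y ω = j ∧ S ω = false}, gX ω ∂μ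
        = (∫ ω, gX ω ∂μ[|{ω | Y ω = j}])
            * (μ (Z ⁻¹' C ∩ {ω | Y ω = j ∧ S ω = false})).toReal := by
    intro j C hC
    by_cases hD0 : μ {ω | Y ω = j ∧ S ω = false} = 0
    · rw [setIntegral_measure_zero _ (measure_mono_null Set.inter_subset_right hD0),
        measure_mono_null Set.inter_subset_right hD0]
      simp
    · haveI := cond_isProbabilityMeasure (μ := μ) hD0
      have hDm : MeasurableSet {ω | Y ω = j ∧ S ω = false} := hYSm j false
      have hAm : MeasurableSet (Z ⁻¹' C) := hZ hC
      have hDr : (μ {ω | Y ω = j ∧ S ω = false}).toReal ≠ 0 :=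
        ENNReal.toReal_ne_zero.mpr ⟨hD0, measure_ne_top μ _⟩
      have h1 : ∫ ω in Z ⁻¹' C, gX ω ∂μ[|{ω | Y ω = j ∧ S ω = false}]
          = (μ[|{ω | Y ω = j ∧ S ω = false}] (Z ⁻¹' C)).toReal
              * ∫ ω, gX ω ∂μ[|{ω | Y ω = j ∧ S ω = false}] :=
        indep_setIntegral hgXm (integrable_cond' hint hD0) hAm
          (fun B hB => hciZ j false hD0 B C hB hC)
      have h2 : ∫ ω, gX ω ∂μ[|{ω | Y ω = j ∧ S ω = false}] = ∫ ω, gX ω ∂μ[|{ω | Y ω = j}] := by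
        rw [← condMean_eq_integral_cond gX hD0]
        exact hstepA j false hD0
      have h3 : ∫ ω in Z ⁻¹' C ∩ {ω | Y ω = j ∧ S ω = false}, gX ω ∂μ
          = (μ {ω | Y ω = j ∧ S ω = false}).toReal
              * ∫ ω in Z ⁻¹' C, gX ω ∂μ[|{ω | Y ω = j ∧ S ω = false}] := by
        rw [setIntegral_cond_eq gX hDm, ← mul_assoc, mul_inv_cancel₀ hDr, one_mul]
      have h4 : (μ[|{ω | Y ω = j ∧ S ω = false}] (Z ⁻¹' C)).toReal
          = (μ {ω | Y ω = j ∧ S ω = false}).toReal⁻¹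
              * (μ (Z ⁻¹' C ∩ {ω | Y ω = j ∧ S ω = false})).toReal := by
        rw [cond_apply hDm, ENNReal.toReal_mul, ENNReal.toReal_inv, Set.inter_comm]
      rw [h3, h1, h2, h4]
      field_simp
  -- a-values
  have ha1 : A1 = ∫ ω, gX ω ∂μ[|{ω | Y ω = true}] := hstepA true true hY1S1
  have ha0 : A0 = ∫ ω, gX ω ∂μ[|{ω | Y ω = false}] := hstepA false true hY0S1
  -- integrability
  have hindint : Integrable indY ν := by
    have : indY = Set.indicator {ω | Y ω = true} (fun _ => (1 : ℝ)) := by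
      funext ω
      simp [hindYdef, Set.indicator_apply, Set.mem_setOf_eq]
    rw [this]
    exact (integrable_const 1).indicator (hYm true)
  have hgtg : Integrable gX ν := integrable_cond' hint hS0
  have hφint : Integrable φ ν := (integrable_const A0).add (hindint.const_mul (A1 - A0))
  -- partition by Y
  have hpart : ∀ (f : Ω → ℝ), Integrable f ν → ∀ E : Set Ω, MeasurableSet E →
      ∫ ω in E, f ω ∂ν = (∫ ω in E ∩ {ω | Y ω = true}, f ω ∂ν)
        + ∫ ω in E ∩ {ω | Y ω = false}, f ω ∂ν := by
    intro f hf E hE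
    have hu : E = (E ∩ {ω | Y ω = true}) ∪ (E ∩ {ω | Y ω = false}) := by
      ext ω
      simp only [Set.mem_union, Set.mem_inter_iff, Set.mem_setOf_eq]
      cases hYω : Y ω <;> tauto
    have hdisj : Disjoint (E ∩ {ω | Y ω = true}) (E ∩ {ω | Y ω = false}) := by
      refine Set.disjoint_left.mpr fun ω h1 h2 => ?_
      simp only [Set.mem_inter_iff, Set.mem_setOf_eq] at h1 h2
      rw [h1.2] at h2
      exact Bool.noConfusion h2.2
    conv_lhs => rw [hu]
    exact setIntegral_union hdisj (hE.inter (hYm false)) hf.integrableOn hf.integrableOn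
  -- the `g(X)` pieces under ν
  have hgj : ∀ (j : Bool) (C : Set (Fin dz → ℝ)), MeasurableSet C →
      ∫ ω in Z ⁻¹' C ∩ {ω | Y ω = j}, gX ω ∂ν
        = (∫ ω, gX ω ∂μ[|{ω | Y ω = j}]) * (ν (Z ⁻¹' C ∩ {ω | Y ω = j})).toReal := by
    intro j C hC
    have hset : (Z ⁻¹' C ∩ {ω | Y ω = j}) ∩ {ω | S ω = false}
        = Z ⁻¹' C ∩ {ω | Y ω = j ∧ S ω = false} := by
      ext ω
      simp only [Set.mem_inter_iff, Set.mem_setOf_eq, Set.mem_preimage]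
      tauto
    have hset2 : {ω | S ω = false} ∩ (Z ⁻¹' C ∩ {ω | Y ω = j})
        = Z ⁻¹' C ∩ {ω | Y ω = j ∧ S ω = false} := by
      ext ω
      simp only [Set.mem_inter_iff, Set.mem_setOf_eq, Set.mem_preimage]
      tauto
    rw [hνdef, setIntegral_cond_eq gX hSf, hset, hstepB j C hC, cond_apply hSf, hset2,
      ENNReal.toReal_mul, ENNReal.toReal_inv]
    ring
  -- the φ pieces under ν
  have hφj : ∀ (j : Bool) (c : ℝ), (∀ ω, Y ω = j → φ ω = c) → ∀ E : Set Ω, MeasurableSet E →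
      ∫ ω in E ∩ {ω | Y ω = j}, φ ω ∂ν = c * (ν (E ∩ {ω | Y ω = j})).toReal := by
    intro j c hc E hE
    rw [setIntegral_congr_fun (hE.inter (hYm j)) (fun ω hω => hc ω hω.2), setIntegral_const,
      smul_eq_mul, mul_comm]
    rfl
  have hφtrue : ∀ ω, Y ω = true → φ ω = A1 := by
    intro ω h
    simp only [hφdef, hindYdef, h, if_true]
    ring
  have hφfalse : ∀ ω, Y ω = false → φ ω = A0 := by
    intro ω h
    simp only [hφdef, hindYdef, h]
    norm_num
  -- set-integral equality over σ(Z)-sets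
  have hsplitC : ∀ t : Set Ω, MeasurableSet[MeasurableSpace.comap Z inferInstance] t →
      ∫ ω in t, gX ω ∂ν = ∫ ω in t, φ ω ∂ν := by
    intro t ht
    obtain ⟨C, hC, rfl⟩ := ht
    have hE : MeasurableSet (Z ⁻¹' C) := hZ hC
    rw [hpart gX hgtg _ hE, hpart φ hφint _ hE, hgj true C hC, hgj false C hC, ← ha1, ← ha0,
      hφj true A1 hφtrue _ hE, hφj false A0 hφfalse _ hE]
  -- conditional expectation
  have hcond : (fun ω => A0 + (A1 - A0)
        * MeasureTheory.condExp (MeasurableSpace.comap Z inferInstance) ν indY ω)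
      =ᵐ[ν] MeasureTheory.condExp (MeasurableSpace.comap Z inferInstance) ν gX := by
    refine ae_eq_condExp_of_forall_setIntegral_eq hm hgtg
      (fun s _ _ => ((integrable_const A0).add (integrable_condExp.const_mul (A1 - A0))).integrableOn)
      (fun s hs _ => ?_) ?_
    · rw [integral_add (integrable_const A0).integrableOn
        ((integrable_condExp.const_mul (A1 - A0)).integrableOn),
        integral_const_mul, setIntegral_condExp hm hindint hs, hsplitC s hs, hφdef]
      rw [integral_add (integrable_const A0).integrableOn (hindint.const_mul (A1 - A0)).integrableOn,
        integral_const_mul]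
    · exact StronglyMeasurable.aestronglyMeasurable (stronglyMeasurable_const.add
        (stronglyMeasurable_const.mul stronglyMeasurable_condExp))
  intro μtg a0 a1 mZ
  refine ⟨hcond.symm, fun hne => ?_⟩
  have hsub : a1 - a0 ≠ 0 := sub_ne_zero_of_ne hne
  filter_upwards [hcond.symm] with ω hω
  rw [hω]
  field_simp
  show ν[indY|MeasurableSpace.comap Z inferInstance] ω * (A1 - A0) = _
  ring
end
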